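/- arXiv:1706.09066 — 5 statements merged into one kernel-verified Lean document; each statement's English description precedes it below -/
import Mathlib

section
/- Let G be a digraph, let s ≠ t be vertices of G, and let k_2,k_3 be nonnegative integers. Set X = N⁺(s)∖{s,t} and Y = N⁻(t)∖{s,t}. Then G contains k_2+k_3 pairwise internally vertex-disjoint (s,t)-paths, each of length at least 2, of which at least k_3 have length at least 3, if and only if there exist an integer r with 0 ≤ r ≤ min{k_2, |X∩Y|}, a set R ⊆ X∩Y with |R| = r, and k_2+k_3−r pairwise vertex-disjoint nontrivial directed paths in the digraph G−{s,t} (obtained by deleting s and t), each starting at a vertex of X and ending at a vertex of Y, none of which contains a vertex of R. -/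
def IsPath {V : Type*} (A : V → V → Prop) (p : List V) : Prop :=
  p ≠ [] ∧ p.Nodup ∧ p.Chain' A

def IsPathFT {V : Type*} (A : V → V → Prop) (u v : V) (p : List V) : Prop :=
  IsPath A p ∧ p.head? = some u ∧ p.getLast? = some v

lemma decomp {V : Type*} {A : V → V → Prop} {s t : V} {p : List V}
    (h : IsPathFT A s t p) (hlen : 3 ≤ p.length) :
    ∃ q : List V, p = s :: q ++ [t] ∧ q.length = p.length - 2 := by
  obtain ⟨⟨hne, hnd, hch⟩, hhd, hlast⟩ := h
  obtain ⟨a, l, rfl⟩ := List.exists_cons_of_ne_nil hne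
  simp only [List.head?_cons, Option.some.injEq] at hhd; subst hhd
  have hl : l ≠ [] := by rintro rfl; simp at hlen
  have h1 : l.dropLast ++ [l.getLast hl] = l := List.dropLast_append_getLast hl
  have h2 : l.getLast hl = t := by
    rw [List.getLast?_cons, List.getLast?_eq_getLast hl] at hlast
    simpa using hlast
  refine ⟨l.dropLast, ?_, by simp [List.length_dropLast]⟩
  conv_lhs => rw [← h1]
  rw [h2]; simp

lemma glue {V : Type*} {A : V → V → Prop} {s t : V} {q : List V} (hq : q ≠ [])
    (hnd : q.Nodup) (hch : q.Chain' A) (hs : s ∉ q) (ht : t ∉ q) (hst : s ≠ t)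
    (hx : A s (q.head hq)) (hy : A (q.getLast hq) t) :
    IsPathFT A s t (s :: q ++ [t]) := by
  refine ⟨⟨by simp, ?_, ?_⟩, by simp, ?_⟩
  · simp only [List.cons_append, List.nodup_cons, List.mem_append, List.mem_singleton]
    refine ⟨by tauto, ?_⟩
    rw [List.nodup_append']
    exact ⟨hnd, List.nodup_singleton t, by simpa [List.disjoint_singleton] using ht⟩
  · unfold List.Chain'
    rw [List.cons_append, List.isChain_cons, List.isChain_append]
    refine ⟨?_, hch, List.isChain_singleton t, ?_⟩
    · intro y hy'
      rw [List.head?_append_of_ne_nil _ hq, List.head?_eq_head hq,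
        Option.mem_some_iff] at hy'
      subst hy'; exact hx
    · intro x hx' y hy'
      simp only [List.head?_cons, Option.mem_some_iff] at hy'; subst hy'
      rw [List.getLast?_eq_getLast hq, Option.mem_some_iff] at hx'
      subst hx'; exact hy
  · rw [show s :: q ++ [t] = (s :: q) ++ [t] by simp, List.getLast?_concat]

lemma unglue {V : Type*} {A : V → V → Prop} {s t : V} {q : List V} (hq : q ≠ [])
    (h : IsPathFT A s t (s :: q ++ [t])) :
    q.Nodup ∧ q.Chain' A ∧ s ∉ q ∧ t ∉ q ∧ A s (q.head hq) ∧ A (q.getLast hq) t := by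
  obtain ⟨⟨-, hnd, hch⟩, -, -⟩ := h
  unfold List.Chain' at hch
  rw [List.cons_append, List.isChain_cons, List.isChain_append] at hch
  obtain ⟨h1, h2, -, h3⟩ := hch
  simp only [List.cons_append, List.nodup_cons, List.mem_append, List.mem_singleton,
    List.nodup_append', List.disjoint_singleton] at hnd
  refine ⟨hnd.2.1, h2, fun hc => hnd.1 (Or.inl hc), hnd.2.2.2, ?_, ?_⟩
  · exact h1 _ (by rw [List.head?_append_of_ne_nil _ hq]; exact List.head?_eq_head hq)
  · exact h3 _ (by rw [List.getLast?_eq_getLast hq]; rfl) t rfl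

lemma head_ne_getLast {α : Type*} {l : List α} (hnd : l.Nodup) (hl : 2 ≤ l.length)
    (hne : l ≠ []) : l.head hne ≠ l.getLast hne := by
  intro heq
  rw [List.head_eq_getElem, List.getLast_eq_getElem] at heq
  have := (List.Nodup.getElem_inj_iff hnd).mp heq
  omega

open Classical in
lemma stmt8_fwd {V : Type*} [Fintype V] [DecidableEq V]
    (A : V → V → Prop) (harc : ∀ a b, A a b → a ≠ b)
    (s t : V) (hst : s ≠ t) (k2 k3 : ℕ)
    (X Y : Set V)
    (hXdef : X = {x | A s x ∧ x ≠ s ∧ x ≠ t})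
    (hYdef : Y = {y | A y t ∧ y ≠ s ∧ y ≠ t})
    (P : Fin (k2 + k3) → List V)
    (hP : ∀ i, IsPathFT A s t (P i) ∧ 3 ≤ (P i).length)
    (hdisj : ∀ i j, i ≠ j → ∀ x, x ∈ P i → x ∈ P j → x = s ∨ x = t)
    (hk3 : k3 ≤ (Finset.univ.filter fun i => 4 ≤ (P i).length).card) :
    (∃ (r : ℕ) (R : Finset V), r ≤ k2 ∧ r ≤ (X ∩ Y).ncard ∧
      (∀ v ∈ R, v ∈ X ∩ Y) ∧ R.card = r ∧
      ∃ Q : Fin (k2 + k3 - r) → List V,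
        (∀ i, ∃ x y, x ∈ X ∧ y ∈ Y ∧ x ≠ y ∧ IsPathFT A x y (Q i) ∧
          ∀ v ∈ Q i, v ≠ s ∧ v ≠ t ∧ v ∉ R) ∧
        (∀ i j, i ≠ j → ∀ v, v ∈ Q i → v ∉ Q j)) := by
  choose q hq hqlen using fun i => decomp (hP i).1 (hP i).2
  set T3 : Finset (Fin (k2 + k3)) := Finset.univ.filter (fun i => (P i).length = 3) with hT3
  set T4 : Finset (Fin (k2 + k3)) := Finset.univ.filter (fun i => 4 ≤ (P i).length) with hT4
  have hT4' : T4 = Finset.univ.filter (fun i => ¬ (P i).length = 3) := by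
    apply Finset.filter_congr
    intro i _
    have := (hP i).2
    constructor
    · intro h; omega
    · intro h; omega
  have hsum : T3.card + T4.card = k2 + k3 := by
    rw [hT4', hT3, Finset.card_filter_add_card_filter_not]
    simp
  set r := T3.card with hr
  have hT4card : T4.card = k2 + k3 - r := by omega
  have hrk2 : r ≤ k2 := by
    have : k3 ≤ T4.card := hk3
    omega
  -- middle vertex function
  set m : Fin (k2 + k3) → V := fun i => (q i).getD 0 s with hm
  have hq1 : ∀ i ∈ T3, q i = [m i] := by
    intro i hi
    rw [hT3, Finset.mem_filter] at hi
    have : (q i).length = 1 := by rw [hqlen]; omega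
    obtain ⟨x, hx⟩ := List.length_eq_one_iff.mp this
    rw [hm]; simp [hx]
  have hmXY : ∀ i ∈ T3, m i ∈ X ∩ Y ∧ m i ∈ P i := by
    intro i hi
    have hqi := hq1 i hi
    have hne : q i ≠ [] := by rw [hqi]; simp
    have hu := unglue hne (hq i ▸ (hP i).1)
    obtain ⟨-, -, hs, ht, hA1, hA2⟩ := hu
    have hmi : m i ∈ q i := by rw [hqi]; simp
    have hh : (q i).head hne = m i := by
      have h' : (q i).head? = some (m i) := by rw [hqi]; rfl
      rwa [List.head?_eq_head hne, Option.some_inj] at h'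
    have hl : (q i).getLast hne = m i := by
      have h' : (q i).getLast? = some (m i) := by rw [hqi]; rfl
      rwa [List.getLast?_eq_getLast hne, Option.some_inj] at h'
    rw [hh] at hA1; rw [hl] at hA2
    constructor
    · rw [hXdef, hYdef]
      exact ⟨⟨hA1, fun h => hs (h ▸ hmi), fun h => ht (h ▸ hmi)⟩,
             ⟨hA2, fun h => hs (h ▸ hmi), fun h => ht (h ▸ hmi)⟩⟩
    · rw [hq i, hqi]; simp
  have hminj : ∀ i ∈ T3, ∀ j ∈ T3, m i = m j → i = j := by
    intro i hi j hj hmeq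
    by_contra hij
    have h1 := (hmXY i hi).2
    have h2 := (hmXY j hj).2
    rw [hmeq] at h1
    have := hdisj j i (fun h => hij h.symm) (m j) h2 h1
    have hXYj := (hmXY j hj).1
    rw [hXdef] at hXYj
    rcases this with h | h
    · exact hXYj.1.2.1 h
    · exact hXYj.1.2.2 h
  refine ⟨r, T3.image m, hrk2, ?_, ?_, Finset.card_image_of_injOn hminj, ?_⟩
  · have hsub : ↑(T3.image m) ⊆ X ∩ Y := by
      intro v hv
      simp only [Finset.coe_image, Set.mem_image, Finset.mem_coe] at hv
      obtain ⟨i, hi, rfl⟩ := hv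
      exact (hmXY i hi).1
    calc r = (T3.image m).card := (Finset.card_image_of_injOn hminj).symm
    _ = (↑(T3.image m) : Set V).ncard := (Set.ncard_coe_finset _).symm
    _ ≤ (X ∩ Y).ncard := Set.ncard_le_ncard hsub (Set.toFinite _)
  · intro v hv
    simp only [Finset.mem_image] at hv
    obtain ⟨i, hi, rfl⟩ := hv
    exact (hmXY i hi).1
  · -- the Q part
    set e : Fin (k2 + k3 - r) → Fin (k2 + k3) :=
      fun b => (T4.equivFin.symm (Fin.cast hT4card.symm b) : _) with he
    have heinj : Function.Injective e := by
      intro a b hab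
      have := Subtype.ext hab
      have := T4.equivFin.symm.injective this
      exact Fin.cast_injective _ this
    have heT4 : ∀ b, e b ∈ T4 := fun b => (T4.equivFin.symm _).2
    refine ⟨fun b => q (e b), ?_, ?_⟩
    · intro b
      set i := e b with hi
      have hiT4 : i ∈ T4 := heT4 b
      rw [hT4, Finset.mem_filter] at hiT4
      have hlen2 : 2 ≤ (q i).length := by rw [hqlen]; omega
      have hne : q i ≠ [] := by intro h; rw [h] at hlen2; simp at hlen2
      have hu := unglue hne (hq i ▸ (hP i).1)
      obtain ⟨hnd, hch, hs, ht, hA1, hA2⟩ := hu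
      have hhead : (q i).head hne ∈ q i := List.head_mem hne
      have hlast : (q i).getLast hne ∈ q i := List.getLast_mem hne
      refine ⟨(q i).head hne, (q i).getLast hne, ?_, ?_, head_ne_getLast hnd hlen2 hne,
        ⟨⟨hne, hnd, hch⟩, List.head?_eq_head hne, List.getLast?_eq_getLast hne⟩, ?_⟩
      · rw [hXdef]
        exact ⟨hA1, fun h => hs (h ▸ hhead), fun h => ht (h ▸ hhead)⟩
      · rw [hYdef]
        exact ⟨hA2, fun h => hs (h ▸ hlast), fun h => ht (h ▸ hlast)⟩
      · intro v hv
        refine ⟨fun h => hs (h ▸ hv), fun h => ht (h ▸ hv), ?_⟩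
        intro hvR
        simp only [Finset.mem_image] at hvR
        obtain ⟨j, hj, hjv⟩ := hvR
        have hji : j ≠ i := by
          intro h
          rw [hT3, Finset.mem_filter] at hj
          rw [h] at hj; omega
        have hvPj : v ∈ P j := hjv ▸ (hmXY j hj).2
        have hvPi : v ∈ P i := by rw [hq i]; simp [show v ∈ q i from hv]
        rcases hdisj j i hji v hvPj hvPi with h | h
        · exact hs (h ▸ hv)
        · exact ht (h ▸ hv)
    · intro a b hab v hva hvb
      have hne : e a ≠ e b := fun h => hab (heinj h)
      have h1 : v ∈ P (e a) := by rw [hq (e a)]; simp [hva]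
      have h2 : v ∈ P (e b) := by rw [hq (e b)]; simp [hvb]
      have hiT4 : e a ∈ T4 := heT4 a
      rw [hT4, Finset.mem_filter] at hiT4
      have hlen2 : 2 ≤ (q (e a)).length := by rw [hqlen]; omega
      have hnea : q (e a) ≠ [] := by intro h; rw [h] at hlen2; simp at hlen2
      have hu := unglue hnea (hq (e a) ▸ (hP (e a)).1)
      rcases hdisj _ _ hne v h1 h2 with h | h
      · exact hu.2.2.1 (h ▸ hva)
      · exact hu.2.2.2.1 (h ▸ hva)

open Classical in
lemma stmt8_bwd {V : Type*} [Fintype V] [DecidableEq V]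
    (A : V → V → Prop) (harc : ∀ a b, A a b → a ≠ b)
    (s t : V) (hst : s ≠ t) (k2 k3 : ℕ)
    (X Y : Set V)
    (hXdef : X = {x | A s x ∧ x ≠ s ∧ x ≠ t})
    (hYdef : Y = {y | A y t ∧ y ≠ s ∧ y ≠ t})
    (r : ℕ) (R : Finset V) (hrk2 : r ≤ k2) (hrn : r ≤ (X ∩ Y).ncard)
    (hRXY : ∀ v ∈ R, v ∈ X ∩ Y) (hRcard : R.card = r)
    (Q : Fin (k2 + k3 - r) → List V)
    (hQ : ∀ i, ∃ x y, x ∈ X ∧ y ∈ Y ∧ x ≠ y ∧ IsPathFT A x y (Q i) ∧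
          ∀ v ∈ Q i, v ≠ s ∧ v ≠ t ∧ v ∉ R)
    (hQdisj : ∀ i j, i ≠ j → ∀ v, v ∈ Q i → v ∉ Q j) :
    (∃ P : Fin (k2 + k3) → List V,
      (∀ i, IsPathFT A s t (P i) ∧ 3 ≤ (P i).length) ∧
      (∀ i j, i ≠ j → ∀ x, x ∈ P i → x ∈ P j → x = s ∨ x = t) ∧
      k3 ≤ (Finset.univ.filter fun i => 4 ≤ (P i).length).card) := by
  choose x y hx hy hxy hQp hQav using hQ
  have hsum : r + (k2 + k3 - r) = k2 + k3 := by omega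
  set e : Fin r ⊕ Fin (k2 + k3 - r) ≃ Fin (k2 + k3) :=
    finSumFinEquiv.trans (finCongr hsum) with he
  set f : Fin r → V := fun a => (R.equivFin.symm (Fin.cast hRcard.symm a) : _) with hf
  have hfinj : Function.Injective f := by
    intro a b hab
    have := Subtype.ext hab
    have := R.equivFin.symm.injective this
    exact Fin.cast_injective _ this
  have hfR : ∀ a, f a ∈ R := fun a => (R.equivFin.symm _).2
  have hfX : ∀ a, f a ∈ X ∩ Y := fun a => hRXY _ (hfR a)
  have hfs : ∀ a, f a ≠ s := fun a => by
    have := hfX a; rw [hXdef] at this; exact this.1.2.1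
  have hft : ∀ a, f a ≠ t := fun a => by
    have := hfX a; rw [hXdef] at this; exact this.1.2.2
  have hfA1 : ∀ a, A s (f a) := fun a => by
    have := hfX a; rw [hXdef] at this; exact this.1.1
  have hfA2 : ∀ a, A (f a) t := fun a => by
    have := hfX a; rw [hYdef] at this; exact this.2.1
  -- facts about Q
  have hQne : ∀ b, Q b ≠ [] := fun b => (hQp b).1.1
  have hQlen : ∀ b, 2 ≤ (Q b).length := by
    intro b
    rcases Nat.lt_or_ge (Q b).length 2 with h | h
    · exfalso
      have h1 : (Q b).length = 1 := by
        have := List.length_pos_iff.mpr (hQne b); omega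
      obtain ⟨a, ha⟩ := List.length_eq_one_iff.mp h1
      have hh := (hQp b).2.1
      have hl := (hQp b).2.2
      rw [ha] at hh hl
      simp at hh hl
      exact hxy b (hh ▸ hl ▸ rfl)
    · exact h
  have hQhead : ∀ b, (Q b).head (hQne b) = x b := by
    intro b
    have := (hQp b).2.1
    rwa [List.head?_eq_head (hQne b), Option.some_inj] at this
  have hQlast : ∀ b, (Q b).getLast (hQne b) = y b := by
    intro b
    have := (hQp b).2.2
    rwa [List.getLast?_eq_getLast (hQne b), Option.some_inj] at this
  have hxX : ∀ b, A s (x b) := fun b => by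
    have := hx b; rw [hXdef] at this; exact this.1
  have hyY : ∀ b, A (y b) t := fun b => by
    have := hy b; rw [hYdef] at this; exact this.1
  have hsQ : ∀ b, s ∉ Q b := fun b h => ((hQav b) s h).1 rfl
  have htQ : ∀ b, t ∉ Q b := fun b h => ((hQav b) t h).2.1 rfl
  refine ⟨fun i => Sum.elim (fun a => [s, f a, t]) (fun b => s :: Q b ++ [t]) (e.symm i),
    ?_, ?_, ?_⟩
  · intro i
    cases h1 : e.symm i with
    | inl a =>
      simp only [h1, Sum.elim_inl]
      constructor
      · have := glue (q := [f a]) (by simp) (by simp) (List.isChain_singleton _)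
          (by simpa using (hfs a).symm) (by simpa using (hft a).symm) hst
          (by simpa using hfA1 a) (by simpa using hfA2 a)
        simpa using this
      · simp
    | inr b =>
      simp only [h1, Sum.elim_inr]
      constructor
      · exact glue (hQne b) (hQp b).1.2.1 (hQp b).1.2.2 (hsQ b) (htQ b) hst
          (hQhead b ▸ hxX b) (hQlast b ▸ hyY b)
      · have := hQlen b; simp; omega
  · intro i j hij v hvi hvj
    have hsymij : e.symm i ≠ e.symm j := fun h => hij (e.symm.injective h)
    by_contra hvst
    push_neg at hvst
    obtain ⟨hvs, hvt⟩ := hvst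
    cases h1 : e.symm i with
    | inl a =>
      simp only [h1, Sum.elim_inl] at hvi
      simp only [List.mem_cons, List.mem_singleton, List.not_mem_nil, or_false] at hvi
      rcases hvi with rfl | rfl | rfl
      · exact hvs rfl
      · -- v = f a
        cases h2 : e.symm j with
        | inl a' =>
          simp only [h2, Sum.elim_inl] at hvj
          simp only [List.mem_cons, List.mem_singleton, List.not_mem_nil, or_false] at hvj
          rcases hvj with h | h | h
          · exact hvs h
          · exact hsymij (h1.trans ((congrArg Sum.inl (hfinj h)).trans h2.symm))
          · exact hvt h
        | inr b =>
          simp only [h2, Sum.elim_inr] at hvj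
          simp only [List.cons_append, List.mem_cons, List.mem_append,
            List.mem_singleton, List.not_mem_nil, or_false] at hvj
          rcases hvj with h | h | h
          · exact hvs h
          · exact ((hQav b) _ h).2.2 (hfR a)
          · exact hvt h
      · exact hvt rfl
    | inr b =>
      simp only [h1, Sum.elim_inr] at hvi
      simp only [List.cons_append, List.mem_cons, List.mem_append,
        List.mem_singleton, List.not_mem_nil, or_false] at hvi
      rcases hvi with rfl | hvQ | rfl
      · exact hvs rfl
      · cases h2 : e.symm j with
        | inl a' =>
          simp only [h2, Sum.elim_inl] at hvj
          simp only [List.mem_cons, List.mem_singleton, List.not_mem_nil, or_false] at hvj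
          rcases hvj with h | h | h
          · exact hvs h
          · exact ((hQav b) _ hvQ).2.2 (h ▸ hfR a')
          · exact hvt h
        | inr b' =>
          simp only [h2, Sum.elim_inr] at hvj
          simp only [List.cons_append, List.mem_cons, List.mem_append,
            List.mem_singleton, List.not_mem_nil, or_false] at hvj
          rcases hvj with h | h | h
          · exact hvs h
          · have hbb : b ≠ b' := by
              intro hb; exact hsymij (h1.trans ((hb ▸ h2).symm))
            exact hQdisj b b' hbb v hvQ h
          · exact hvt h
      · exact hvt rfl
  · have hsub : (Finset.univ.image fun b => e (Sum.inr b)) ⊆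
        (Finset.univ.filter fun i => 4 ≤ ((fun i => Sum.elim (fun a => [s, f a, t])
          (fun b => s :: Q b ++ [t]) (e.symm i)) i).length) := by
      intro i hi
      simp only [Finset.mem_image, Finset.mem_univ, true_and] at hi
      obtain ⟨b, rfl⟩ := hi
      simp only [Finset.mem_filter, Finset.mem_univ, true_and, Equiv.symm_apply_apply,
        Sum.elim_inr]
      have := hQlen b; simp; omega
    have hcard : (Finset.univ.image fun b => e (Sum.inr b)).card = k2 + k3 - r := by
      have hinj : Function.Injective (fun b : Fin (k2 + k3 - r) => e (Sum.inr b)) :=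
        fun a b h => Sum.inr_injective (e.injective h)
      rw [Finset.card_image_of_injective _ hinj]
      simp
    have := Finset.card_le_card hsub
    rw [hcard] at this
    omega

theorem stmt8 {V : Type*} [Fintype V] [DecidableEq V]
    (A : V → V → Prop) (harc : ∀ a b, A a b → a ≠ b)
    (s t : V) (hst : s ≠ t) (k2 k3 : ℕ)
    (X Y : Set V)
    (hXdef : X = {x | A s x ∧ x ≠ s ∧ x ≠ t})
    (hYdef : Y = {y | A y t ∧ y ≠ s ∧ y ≠ t}) :
    (∃ P : Fin (k2 + k3) → List V,
      (∀ i, IsPathFT A s t (P i) ∧ 3 ≤ (P i).length) ∧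
      (∀ i j, i ≠ j → ∀ x, x ∈ P i → x ∈ P j → x = s ∨ x = t) ∧
      k3 ≤ (Finset.univ.filter fun i => 4 ≤ (P i).length).card) ↔
    (∃ (r : ℕ) (R : Finset V), r ≤ k2 ∧ r ≤ (X ∩ Y).ncard ∧
      (∀ v ∈ R, v ∈ X ∩ Y) ∧ R.card = r ∧
      ∃ Q : Fin (k2 + k3 - r) → List V,
        (∀ i, ∃ x y, x ∈ X ∧ y ∈ Y ∧ x ≠ y ∧ IsPathFT A x y (Q i) ∧
          ∀ v ∈ Q i, v ≠ s ∧ v ≠ t ∧ v ∉ R) ∧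
        (∀ i j, i ≠ j → ∀ v, v ∈ Q i → v ∉ Q j)) := by
  constructor
  · rintro ⟨P, h1, h2, h3⟩
    exact stmt8_fwd A harc s t hst k2 k3 X Y hXdef hYdef P h1 h2 h3
  · rintro ⟨r, R, h1, h2, h3, h4, Q, h5, h6⟩
    exact stmt8_bwd A harc s t hst k2 k3 X Y hXdef hYdef r R h1 h2 h3 h4 Q h5 h6
end

section
/- Let H be an acyclic digraph with a fixed topological ordering ≤ of V(H), let x ∈ V(H), let e_1,…,e_k be pairwise distinct arcs of H and let t_1,…,t_k be nonnegative integers. Call the tuple (e_1,t_1,…,e_k,t_k) realizable (from x) if there exist k pairwise arc-disjoint paths P_1,…,P_k in H, each starting at x, such that for each j the last arc of P_j is e_j and the length of P_j is at least t_j. Let w be the ≤-greatest vertex among the heads of e_1,…,e_k, let w' be the ≤-greatest vertex among the tails of those arcs of {e_1,…,e_k} whose head is w, and let i be the index with e_i = (w',w). Assume w ≠ x. Then (e_1,t_1,…,e_k,t_k) is realizable if and only if at least one of the following holds: (i) there is an arc e of H with head w' and e ∉ {e_1,…,e_k} such that the tuple obtained from (e_1,t_1,…,e_k,t_k) by replacing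 e_i by e and t_i by max(t_i−1,0) is realizable; (ii) w' = x, t_i ≤ 1, and the tuple (e_1,t_1,…,e_{i−1},t_{i−1},e_{i+1},t_{i+1},…,e_k,t_k) obtained by removing the i-th pair is realizable. -/
/-- The list of arcs of a path (consecutive pairs of vertices). -/
def arcsOf {V : Type*} (p : List V) : List (V × V) := p.zip p.tail

/-- The tuple `(e 0, t 0, …)` is realizable from `x` in the digraph with arc relation
`A`: there are `k` pairwise arc-disjoint paths `P j`, each starting at `x`, such that
the last arc of `P j` is `e j` and the length (number of arcs) of `P j` is at
least `t j`. -/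
def Realizable {V : Type*} (A : V → V → Prop) (x : V) {k : ℕ}
    (e : Fin k → V × V) (t : Fin k → ℕ) : Prop :=
  ∃ P : Fin k → List V,
    (∀ j, (P j).Nodup ∧ (P j).Chain' A ∧ (P j).head? = some x ∧
      (∃ q, P j = q ++ [(e j).1, (e j).2]) ∧ t j + 1 ≤ (P j).length) ∧
    ∀ i j, i ≠ j → ∀ a ∈ arcsOf (P i), a ∉ arcsOf (P j)

section Aux
variable {V : Type*}

lemma arcsOf_cons_cons (a b : V) (l : List V) :
    arcsOf (a :: b :: l) = (a, b) :: arcsOf (b :: l) := rfl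

lemma arcsOf_subset_cons (a : V) (r : List V) :
    arcsOf r ⊆ arcsOf (a :: r) := by
  cases r with
  | nil => simp [arcsOf]
  | cons c r' => rw [arcsOf_cons_cons]; exact List.subset_cons_self _ _

lemma mem_arcsOf {p : List V} {u v : V} :
    (u, v) ∈ arcsOf p ↔ ∃ s t, p = s ++ u :: v :: t := by
  constructor
  · intro h
    induction p with
    | nil => simp [arcsOf] at h
    | cons a p ih =>
      cases p with
      | nil => simp [arcsOf] at h
      | cons b r =>
        rw [arcsOf_cons_cons, List.mem_cons] at h
        rcases h with h | h
        · exact ⟨[], r, by simp [Prod.ext_iff] at h; simp [h.1, h.2]⟩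
        · obtain ⟨s, t, hst⟩ := ih h
          exact ⟨a :: s, t, by simp [hst]⟩
  · rintro ⟨s, t, rfl⟩
    induction s with
    | nil =>
      simp only [List.nil_append]; rw [arcsOf_cons_cons]
      exact List.mem_cons_self
    | cons a s ih => exact arcsOf_subset_cons a _ ih

lemma rel_of_mem_arcsOf {A : V → V → Prop} {p : List V} {u v : V}
    (hc : p.Chain' A) (h : (u, v) ∈ arcsOf p) : A u v := by
  induction p with
  | nil => simp [arcsOf] at h
  | cons a p ih =>
    cases p with
    | nil => simp [arcsOf] at h
    | cons b r =>
      rw [arcsOf_cons_cons, List.mem_cons] at h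
      rcases h with h | h
      · rw [Prod.ext_iff] at h; simp at h; rw [h.1, h.2]; exact hc.rel_head
      · exact ih hc.tail h

lemma arcsOf_subset_concat (l : List V) (c : V) :
    arcsOf l ⊆ arcsOf (l ++ [c]) := by
  rintro ⟨u, v⟩ h
  obtain ⟨s, t, rfl⟩ := mem_arcsOf.1 h
  exact mem_arcsOf.2 ⟨s, t ++ [c], by simp⟩

lemma mem_arcsOf_concat {l : List V} {c : V} {u v : V}
    (h : (u, v) ∈ arcsOf (l ++ [c])) :
    (u, v) ∈ arcsOf l ∨ (l.getLast? = some u ∧ v = c) := by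
  obtain ⟨s, t, hst⟩ := mem_arcsOf.1 h
  rcases List.eq_nil_or_concat t with rfl | ⟨t', d, rfl⟩
  · right
    have h2 : l ++ [c] = (s ++ [u]) ++ [v] := by simpa using hst
    obtain ⟨h3, h4⟩ := List.append_inj' h2 rfl
    refine ⟨?_, by simpa using h4.symm⟩
    rw [h3, List.getLast?_concat]
  · left
    have h2 : l ++ [c] = (s ++ u :: v :: t') ++ [d] := by
      rw [hst]; simp [List.concat_eq_append]
    obtain ⟨h3, _⟩ := List.append_inj' h2 rfl
    exact mem_arcsOf.2 ⟨s, t', h3⟩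

lemma head?_append_left {l : List V} (h : l ≠ []) (l' : List V) :
    (l ++ l').head? = l.head? := by
  cases l with
  | nil => simp at h
  | cons a r => simp

variable [LinearOrder V]

lemma mem_le_last {p Q : List V} {a b : V}
    (hp : p.Pairwise (· < ·)) (hPQ : p = Q ++ [a, b]) {c : V} (hc : c ∈ p) : c ≤ b := by
  subst hPQ
  have h : Q ++ [a, b] = (Q ++ [a]) ++ [b] := by simp
  rw [h] at hp hc
  rw [List.pairwise_append] at hp
  rcases List.mem_append.1 hc with h | h
  · exact le_of_lt (hp.2.2 _ h _ (List.mem_singleton_self _))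
  · simp at h; exact le_of_eq h

lemma last_arc {p Q : List V} {a b u v : V}
    (hp : p.Pairwise (· < ·)) (hPQ : p = Q ++ [a, b]) (hb : b ≤ v)
    (hm : (u, v) ∈ arcsOf p) : u = a ∧ v = b := by
  obtain ⟨s, t, hst⟩ := mem_arcsOf.1 hm
  have hvp : v ∈ p := by rw [hst]; simp
  have hvb : v = b := le_antisymm (mem_le_last hp hPQ hvp) hb
  have ht : t = [] := by
    by_contra hne
    obtain ⟨c, hc⟩ := List.exists_mem_of_ne_nil t hne
    have h1 : v < c := by
      have hp' := hp; rw [hst, List.pairwise_append] at hp'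
      exact (List.pairwise_cons.1 (List.pairwise_cons.1 hp'.2.1).2).1 c hc
    have h2 : c ∈ p := by rw [hst]; simp; tauto
    exact absurd h1 (not_lt.2 ((mem_le_last hp hPQ h2).trans hvb.symm.le))
  subst ht
  have h2 : s ++ [u, v] = Q ++ [a, b] := by rw [← hst]; exact hPQ
  obtain ⟨_, h4⟩ := List.append_inj' h2 rfl
  simp at h4
  exact ⟨h4.1, h4.2⟩

lemma arc_head_ge {A : V → V → Prop} (htopo : ∀ a b, A a b → a < b)
    {p Q : List V} {a b u v : V} (hc : p.Chain' A) (hPQ : p = Q ++ [a, b])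
    (hb : b ≤ v) (hm : (u, v) ∈ arcsOf p) : u = a ∧ v = b :=
  last_arc (List.isChain_iff_pairwise.1 (List.IsChain.imp htopo hc)) hPQ hb hm

end Aux

theorem stmt10 {V : Type*} [LinearOrder V] (A : V → V → Prop)
    (htopo : ∀ a b, A a b → a < b)
    (x : V) (m : ℕ) (e : Fin (m + 1) → V × V) (t : Fin (m + 1) → ℕ)
    (he : ∀ j, A (e j).1 (e j).2) (hinj : Function.Injective e)
    (w w' : V) (i : Fin (m + 1))
    (hei : e i = (w', w))
    (hw : ∀ j, (e j).2 ≤ w)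
    (hw' : ∀ j, (e j).2 = w → (e j).1 ≤ w')
    (hwx : w ≠ x) :
    Realizable A x e t ↔
      ((∃ z, A z w' ∧ (∀ j, (z, w') ≠ e j) ∧
          Realizable A x (Function.update e i (z, w'))
            (Function.update t i (t i - 1))) ∨
        (w' = x ∧ t i ≤ 1 ∧
          Realizable A x (e ∘ i.succAbove) (t ∘ i.succAbove))) := by
  have hw'w : w' < w := by
    have h := he i; rw [hei] at h; exact htopo _ _ h
  constructor
  · rintro ⟨P, hP, hdisj⟩
    obtain ⟨hnd, hch, hhd, ⟨q, hq0⟩, hlen⟩ := hP i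
    have hq : P i = q ++ [w', w] := by rw [hq0, hei]
    rcases List.eq_nil_or_concat q with rfl | ⟨q', z, rfl⟩
    · right
      have hx : w' = x := by
        rw [hq] at hhd; simp at hhd; exact hhd
      have hti : t i ≤ 1 := by
        rw [hq] at hlen; simp at hlen; omega
      exact ⟨hx, hti, P ∘ i.succAbove, fun j => hP _,
        fun j j' hjj' => hdisj _ _ fun hE => hjj' (Fin.succAbove_right_injective hE)⟩
    · left
      rw [List.concat_eq_append] at hq
      have hq2 : P i = (q' ++ [z, w']) ++ [w] := by rw [hq]; simp
      have hz : (z, w') ∈ arcsOf (P i) := mem_arcsOf.2 ⟨q', [w], by rw [hq]; simp⟩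
      have hAz : A z w' := rel_of_mem_arcsOf hch hz
      refine ⟨z, hAz, ?_, ?_⟩
      · intro j hEj
        by_cases hji : j = i
        · subst hji
          rw [hei] at hEj
          have hzw : z = w' := congrArg Prod.fst hEj
          exact absurd (htopo _ _ hAz) (by rw [hzw]; exact lt_irrefl _)
        · obtain ⟨_, _, _, ⟨r, hr⟩, _⟩ := hP j
          have hmem : (z, w') ∈ arcsOf (P j) :=
            mem_arcsOf.2 ⟨r, [], by rw [hr, ← hEj]⟩
          exact hdisj i j (fun h => hji h.symm) _ hz hmem
      · refine ⟨Function.update P i (q' ++ [z, w']), ?_, ?_⟩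
        · intro j
          by_cases hji : j = i
          · rw [hji]
            simp only [Function.update_self]
            have hsub : (q' ++ [z, w']).Sublist (P i) := by
              rw [hq2]; exact List.sublist_append_left _ _
            have hch' := hch
            rw [hq2, List.Chain', List.isChain_append] at hch'
            refine ⟨hnd.sublist hsub, hch'.1, ?_, ⟨q', rfl⟩, ?_⟩
            · rw [← head?_append_left (by simp) [w], ← hq2]; exact hhd
            · have h2 : (P i).length = (q' ++ [z, w']).length + 1 := by
                rw [hq2]; simp
              have h3 : (q' ++ [z, w']).length = q'.length + 2 := by simp
              omega
          · simp only [Function.update_of_ne hji]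
            exact hP j
        · intro j j' hne
          by_cases hji : j = i <;> by_cases hj'i : j' = i
          · exact absurd (hji.trans hj'i.symm) hne
          · rw [hji]
            simp only [Function.update_self, Function.update_of_ne hj'i]
            intro a ha
            have ha' : a ∈ arcsOf (P i) := by
              rw [hq2]; exact arcsOf_subset_concat _ _ ha
            exact hdisj i j' (hji ▸ hne) a ha'
          · rw [hj'i]
            simp only [Function.update_self, Function.update_of_ne hji]
            intro a ha hmem
            have hmem' : a ∈ arcsOf (P i) := by
              rw [hq2]; exact arcsOf_subset_concat _ _ hmem
            exact hdisj j i (hj'i ▸ hne) a ha hmem'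
          · simp only [Function.update_of_ne hji, Function.update_of_ne hj'i]
            exact hdisj j j' hne
  · rintro (⟨z, hAz, hzne, P, hP, hdisj⟩ | ⟨hx, hti, P, hP, hdisj⟩)
    · obtain ⟨hnd, hch, hhd, ⟨q, hq0⟩, hlen0⟩ := hP i
      have hq : P i = q ++ [z, w'] := by
        rw [hq0]; simp only [Function.update_self]
      have hlen : t i - 1 + 1 ≤ (P i).length := by
        simpa only [Function.update_self] using hlen0
      have hPne : P i ≠ [] := by rw [hq]; simp
      have hpair : (P i).Pairwise (· < ·) :=
        List.isChain_iff_pairwise.1 (List.IsChain.imp htopo hch)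
      have hwni : w ∉ P i := fun hmem =>
        absurd (mem_le_last hpair hq hmem) (not_le.2 hw'w)
      have hlast : (P i).getLast? = some w' := by
        have h2 : P i = (q ++ [z]) ++ [w'] := by rw [hq]; simp
        rw [h2, List.getLast?_concat]
      have key : ∀ j'', j'' ≠ i → (w', w) ∉ arcsOf (P j'') := by
        intro j'' hj'' hmem
        obtain ⟨_, hch'', _, ⟨r, hr0⟩, _⟩ := hP j''
        have hr : P j'' = r ++ [(e j'').1, (e j'').2] := by
          rw [hr0, Function.update_of_ne hj'']
        obtain ⟨h1, h2⟩ := arc_head_ge htopo hch'' hr (hw j'') hmem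
        have hE : e j'' = e i := by
          rw [hei, Prod.ext_iff]; exact ⟨h1.symm, h2.symm⟩
        exact hj'' (hinj hE)
      refine ⟨Function.update P i (P i ++ [w]), ?_, ?_⟩
      · intro j
        by_cases hji : j = i
        · rw [hji]
          simp only [Function.update_self]
          refine ⟨?_, ?_, ?_, ⟨q ++ [z], ?_⟩, ?_⟩
          · rw [List.nodup_append]
            refine ⟨hnd, by simp, fun c hc b hb hcb => ?_⟩
            simp at hb; subst hb; subst hcb; exact hwni hc
          · rw [List.Chain', List.isChain_append]
            refine ⟨hch, by simp, ?_⟩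
            intro a ha y hy
            simp at hy; subst hy
            rw [hlast] at ha; simp at ha; subst ha
            have hh := he i; rw [hei] at hh; exact hh
          · rw [head?_append_left hPne]; exact hhd
          · rw [hq, hei]; simp
          · have h2 : (P i ++ [w]).length = (P i).length + 1 := by simp
            omega
        · simp only [Function.update_of_ne hji]
          have h := hP j
          simp only [Function.update_of_ne hji] at h
          exact h
      · intro j j' hne
        by_cases hji : j = i <;> by_cases hj'i : j' = i
        · exact absurd (hji.trans hj'i.symm) hne
        · rw [hji]
          simp only [Function.update_self, Function.update_of_ne hj'i]
          rintro ⟨u, v⟩ ha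
          rcases mem_arcsOf_concat ha with ha' | ⟨h1, h2⟩
          · exact hdisj i j' (hji ▸ hne) _ ha'
          · rw [hlast] at h1; simp at h1
            subst h1; subst h2
            exact key j' hj'i
        · rw [hj'i]
          simp only [Function.update_self, Function.update_of_ne hji]
          rintro ⟨u, v⟩ ha hmem
          rcases mem_arcsOf_concat hmem with h | ⟨h1, h2⟩
          · exact hdisj j i (hj'i ▸ hne) _ ha h
          · rw [hlast] at h1; simp at h1
            subst h1; subst h2
            exact key j hji ha
        · simp only [Function.update_of_ne hji, Function.update_of_ne hj'i]
          exact hdisj j j' hne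
    · have hAxw : A x w := by
        have hh := he i; rw [hei] at hh
        rw [← hx]; exact hh
      have key : ∀ l : Fin m, (x, w) ∉ arcsOf (P l) := by
        intro l hmem
        obtain ⟨_, hch'', _, ⟨r, hr⟩, _⟩ := hP l
        obtain ⟨h1, h2⟩ := arc_head_ge htopo hch'' hr (hw (i.succAbove l)) hmem
        simp only [Function.comp_apply] at h1 h2
        have hE : e (i.succAbove l) = e i := by
          rw [hei, Prod.ext_iff]
          exact ⟨by rw [← h1, hx], h2.symm⟩
        exact Fin.succAbove_ne i l (hinj hE)
      refine ⟨i.insertNth [x, w] P, ?_, ?_⟩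
      · intro j
        by_cases hji : j = i
        · rw [hji, Fin.insertNth_apply_same]
          refine ⟨?_, ?_, rfl, ⟨[], ?_⟩, ?_⟩
          · simp [Ne.symm hwx]
          · exact List.isChain_pair.2 hAxw
          · rw [hei]; simp [hx]
          · simp; omega
        · obtain ⟨l, hl⟩ := Fin.exists_succAbove_eq hji
          rw [← hl, Fin.insertNth_apply_succAbove]
          exact hP l
      · intro j j' hne
        by_cases hji : j = i <;> by_cases hj'i : j' = i
        · exact absurd (hji.trans hj'i.symm) hne
        · obtain ⟨l, hl⟩ := Fin.exists_succAbove_eq hj'i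
          rw [hji, Fin.insertNth_apply_same, ← hl, Fin.insertNth_apply_succAbove]
          intro a ha
          have ha' : a = (x, w) := by simpa [arcsOf] using ha
          rw [ha']; exact key l
        · obtain ⟨l, hl⟩ := Fin.exists_succAbove_eq hji
          rw [hj'i, Fin.insertNth_apply_same, ← hl, Fin.insertNth_apply_succAbove]
          intro a ha hmem
          have hmem' : a = (x, w) := by simpa [arcsOf] using hmem
          rw [hmem'] at ha; exact key l ha
        · obtain ⟨l, hl⟩ := Fin.exists_succAbove_eq hji
          obtain ⟨l', hl'⟩ := Fin.exists_succAbove_eq hj'i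
          rw [← hl, ← hl', Fin.insertNth_apply_succAbove, Fin.insertNth_apply_succAbove]
          refine hdisj l l' fun hE => hne ?_
          rw [← hl, ← hl', hE]
end

section
/- Let n ≥ 1 and let A = {a_1,…,a_n}, B = {b_1,…,b_n}, C = {c_1,…,c_n} be pairwise disjoint sets, and let 𝒯 ⊆ A×B×C be a set of m triples. Construct a digraph G as follows: take as vertices a_1,…,a_n, b_1,…,b_n, c_1,…,c_n; for each triple T = (a_i,b_j,c_p) ∈ 𝒯 add six new vertices x_0^T, x_1^T, y_0^T, y_1^T, z_0^T, z_1^T and the arcs (x_0^T,x_1^T), (x_1^T,a_i), (x_1^T,y_0^T), (y_0^T,y_1^T), (y_1^T,b_j), (x_0^T,z_0^T), (z_0^T,z_1^T), (z_1^T,c_p); finally add a new vertex s with an arc from s to every other vertex, and a new vertex t with an arc from every vertex other than s to t. Then 𝒯 contains n pairwise disjoint triples (equivalently, a subfamily of triples covering each element of A ∪ B ∪ C exactly once) if and only if G contains a subdivision of a ((n+2m)×4)-spindle. -/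
set_option maxHeartbeats 3200000


/-- The digraph with arc relation `A` contains a subdivision of a `(k × l)`-spindle
with tail `s` and head `t`: `k` pairwise distinct and pairwise internally
vertex-disjoint `(s,t)`-paths, each of length (number of arcs) at least `l`. -/
def SpindleAt {V : Type*} (A : V → V → Prop) (k l : ℕ) (s t : V) : Prop :=
  ∃ P : Fin k → List V,
    (∀ i, IsPathFT A s t (P i) ∧ l + 1 ≤ (P i).length) ∧
    ∀ i j, i ≠ j → P i ≠ P j ∧ ∀ x, x ∈ P i → x ∈ P j → x = s ∨ x = t

/-- The vertices of the digraph `G` built from an instance of 3-Dimensional Matching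
with elements `a i, b i, c i` (`i : Fin n`) and `m` triples: for each triple `i : Fin m`
there are six gadget vertices `x0 i, x1 i, y0 i, y1 i, z0 i, z1 i`, plus a global
source `s` and sink `t`. -/
inductive Vtx (n m : ℕ) where
  | a : Fin n → Vtx n m
  | b : Fin n → Vtx n m
  | c : Fin n → Vtx n m
  | x0 : Fin m → Vtx n m
  | x1 : Fin m → Vtx n m
  | y0 : Fin m → Vtx n m
  | y1 : Fin m → Vtx n m
  | z0 : Fin m → Vtx n m
  | z1 : Fin m → Vtx n m
  | s : Vtx n m
  | t : Vtx n m

/-- The arcs of the digraph `G` built from the 3-Dimensional Matching instance whose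
triples are `T i = (a-, b-, c-coordinate)`: the gadget arcs
`(x0,x1), (x1,a), (x1,y0), (y0,y1), (y1,b), (x0,z0), (z0,z1), (z1,c)` for each triple,
an arc from `s` to every other vertex, and an arc from every vertex other than `s`
(and `t`) to `t`. -/
def arcRel {n m : ℕ} (T : Fin m → Fin n × Fin n × Fin n) :
    Vtx n m → Vtx n m → Prop := fun u v =>
  (u = .s ∧ v ≠ .s ∧ v ≠ .t) ∨
  (v = .t ∧ u ≠ .s ∧ u ≠ .t) ∨
  (∃ i, u = .x0 i ∧ v = .x1 i) ∨
  (∃ i, u = .x1 i ∧ v = .a (T i).1) ∨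
  (∃ i, u = .x1 i ∧ v = .y0 i) ∨
  (∃ i, u = .y0 i ∧ v = .y1 i) ∨
  (∃ i, u = .y1 i ∧ v = .b (T i).2.1) ∨
  (∃ i, u = .x0 i ∧ v = .z0 i) ∨
  (∃ i, u = .z0 i ∧ v = .z1 i) ∨
  (∃ i, u = .z1 i ∧ v = .c (T i).2.2)

deriving instance DecidableEq for Vtx

def vtxEquiv (n m : ℕ) : Vtx n m ≃ (Fin n ⊕ Fin n ⊕ Fin n ⊕ Fin m ⊕ Fin m ⊕ Fin m ⊕ Fin m ⊕ Fin m ⊕ Fin m ⊕ Unit ⊕ Unit) where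
  toFun v := match v with
    | .a i => Sum.inl i
    | .b i => Sum.inr (Sum.inl i)
    | .c i => Sum.inr (Sum.inr (Sum.inl i))
    | .x0 i => Sum.inr (Sum.inr (Sum.inr (Sum.inl i)))
    | .x1 i => Sum.inr (Sum.inr (Sum.inr (Sum.inr (Sum.inl i))))
    | .y0 i => Sum.inr (Sum.inr (Sum.inr (Sum.inr (Sum.inr (Sum.inl i)))))
    | .y1 i => Sum.inr (Sum.inr (Sum.inr (Sum.inr (Sum.inr (Sum.inr (Sum.inl i))))))
    | .z0 i => Sum.inr (Sum.inr (Sum.inr (Sum.inr (Sum.inr (Sum.inr (Sum.inr (Sum.inl i)))))))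
    | .z1 i => Sum.inr (Sum.inr (Sum.inr (Sum.inr (Sum.inr (Sum.inr (Sum.inr (Sum.inr (Sum.inl i))))))))
    | .s => Sum.inr (Sum.inr (Sum.inr (Sum.inr (Sum.inr (Sum.inr (Sum.inr (Sum.inr (Sum.inr (Sum.inl ())))))))))
    | .t => Sum.inr (Sum.inr (Sum.inr (Sum.inr (Sum.inr (Sum.inr (Sum.inr (Sum.inr (Sum.inr (Sum.inr ())))))))))
  invFun v := match v with
    | Sum.inl i => .a i
    | Sum.inr (Sum.inl i) => .b i
    | Sum.inr (Sum.inr (Sum.inl i)) => .c i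
    | Sum.inr (Sum.inr (Sum.inr (Sum.inl i))) => .x0 i
    | Sum.inr (Sum.inr (Sum.inr (Sum.inr (Sum.inl i)))) => .x1 i
    | Sum.inr (Sum.inr (Sum.inr (Sum.inr (Sum.inr (Sum.inl i))))) => .y0 i
    | Sum.inr (Sum.inr (Sum.inr (Sum.inr (Sum.inr (Sum.inr (Sum.inl i)))))) => .y1 i
    | Sum.inr (Sum.inr (Sum.inr (Sum.inr (Sum.inr (Sum.inr (Sum.inr (Sum.inl i))))))) => .z0 i
    | Sum.inr (Sum.inr (Sum.inr (Sum.inr (Sum.inr (Sum.inr (Sum.inr (Sum.inr (Sum.inl i)))))))) => .z1 i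
    | Sum.inr (Sum.inr (Sum.inr (Sum.inr (Sum.inr (Sum.inr (Sum.inr (Sum.inr (Sum.inr (Sum.inl ()))))))))) => .s
    | Sum.inr (Sum.inr (Sum.inr (Sum.inr (Sum.inr (Sum.inr (Sum.inr (Sum.inr (Sum.inr (Sum.inr ()))))))))) => .t
  left_inv v := by cases v <;> rfl
  right_inv v := by rcases v with _|_|_|_|_|_|_|_|_|⟨⟨⟩⟩|⟨⟨⟩⟩ <;> rfl

instance (n m : ℕ) : Fintype (Vtx n m) := Fintype.ofEquiv _ (vtxEquiv n m).symm

lemma vtx_card (n m : ℕ) : Fintype.card (Vtx n m) = 3*n + 6*m + 2 := by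
  rw [Fintype.card_congr (vtxEquiv n m)]
  simp; ring

lemma no_into_s {n m : ℕ} (T : Fin m → Fin n × Fin n × Fin n) {a b : Vtx n m}
    (h : arcRel T a b) : b ≠ .s := by
  rcases h with ⟨_,h,_⟩|⟨rfl,_⟩|⟨i,_,rfl⟩|⟨i,_,rfl⟩|⟨i,_,rfl⟩|⟨i,_,rfl⟩|⟨i,_,rfl⟩|⟨i,_,rfl⟩|⟨i,_,rfl⟩|⟨i,_,rfl⟩ <;> simp_all

lemma no_out_t {n m : ℕ} (T : Fin m → Fin n × Fin n × Fin n) {a b : Vtx n m}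
    (h : arcRel T a b) : a ≠ .t := by
  rcases h with ⟨rfl,_⟩|⟨_,_,h⟩|⟨i,rfl,_⟩|⟨i,rfl,_⟩|⟨i,rfl,_⟩|⟨i,rfl,_⟩|⟨i,rfl,_⟩|⟨i,rfl,_⟩|⟨i,rfl,_⟩|⟨i,rfl,_⟩ <;> simp_all

def Gad {n m : ℕ} (T : Fin m → Fin n × Fin n × Fin n) (u v : Vtx n m) : Prop :=
  (∃ i, u = .x0 i ∧ v = .x1 i) ∨
  (∃ i, u = .x1 i ∧ v = .a (T i).1) ∨
  (∃ i, u = .x1 i ∧ v = .y0 i) ∨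
  (∃ i, u = .y0 i ∧ v = .y1 i) ∨
  (∃ i, u = .y1 i ∧ v = .b (T i).2.1) ∨
  (∃ i, u = .x0 i ∧ v = .z0 i) ∨
  (∃ i, u = .z0 i ∧ v = .z1 i) ∨
  (∃ i, u = .z1 i ∧ v = .c (T i).2.2)

lemma arc_gad {n m : ℕ} {T : Fin m → Fin n × Fin n × Fin n} {a b : Vtx n m}
    (h : arcRel T a b) (ha : a ≠ .s) (hb : b ≠ .t) : Gad T a b := by
  rcases h with ⟨rfl,_⟩|⟨rfl,_⟩|h|h|h|h|h|h|h|h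
  · exact absurd rfl ha
  · exact absurd rfl hb
  · exact Or.inl h
  · exact Or.inr (Or.inl h)
  · exact Or.inr (Or.inr (Or.inl h))
  · exact Or.inr (Or.inr (Or.inr (Or.inl h)))
  · exact Or.inr (Or.inr (Or.inr (Or.inr (Or.inl h))))
  · exact Or.inr (Or.inr (Or.inr (Or.inr (Or.inr (Or.inl h)))))
  · exact Or.inr (Or.inr (Or.inr (Or.inr (Or.inr (Or.inr (Or.inl h))))))
  · exact Or.inr (Or.inr (Or.inr (Or.inr (Or.inr (Or.inr (Or.inr h))))))

/-- classification of two-step gadget chains -/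
lemma chain_class {n m : ℕ} {T : Fin m → Fin n × Fin n × Fin n} {p q r : Vtx n m}
    (h1 : Gad T p q) (h2 : Gad T q r) :
    (∃ i, p = .x0 i ∧ q = .x1 i ∧ r = .a (T i).1) ∨
    (∃ i, p = .x0 i ∧ q = .x1 i ∧ r = .y0 i) ∨
    (∃ i, p = .x1 i ∧ q = .y0 i ∧ r = .y1 i) ∨
    (∃ i, p = .y0 i ∧ q = .y1 i ∧ r = .b (T i).2.1) ∨
    (∃ i, p = .x0 i ∧ q = .z0 i ∧ r = .z1 i) ∨
    (∃ i, p = .z0 i ∧ q = .z1 i ∧ r = .c (T i).2.2) := by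
  rcases h1 with ⟨i,rfl,rfl⟩|⟨i,rfl,rfl⟩|⟨i,rfl,rfl⟩|⟨i,rfl,rfl⟩|⟨i,rfl,rfl⟩|⟨i,rfl,rfl⟩|⟨i,rfl,rfl⟩|⟨i,rfl,rfl⟩ <;>
    rcases h2 with ⟨j,hj,rfl⟩|⟨j,hj,rfl⟩|⟨j,hj,rfl⟩|⟨j,hj,rfl⟩|⟨j,hj,rfl⟩|⟨j,hj,rfl⟩|⟨j,hj,rfl⟩|⟨j,hj,rfl⟩ <;>
    simp_all

section arcs
variable {n m : ℕ} (T : Fin m → Fin n × Fin n × Fin n)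

lemma aS (v : Vtx n m) (h1 : v ≠ .s) (h2 : v ≠ .t) : arcRel T .s v := Or.inl ⟨rfl, h1, h2⟩
lemma aT (u : Vtx n m) (h1 : u ≠ .s) (h2 : u ≠ .t) : arcRel T u .t := Or.inr (Or.inl ⟨rfl, h1, h2⟩)
lemma aX0X1 (i : Fin m) : arcRel T (.x0 i) (.x1 i) := Or.inr (Or.inr (Or.inl ⟨i, rfl, rfl⟩))
lemma aX1A (i : Fin m) : arcRel T (.x1 i) (.a (T i).1) := Or.inr (Or.inr (Or.inr (Or.inl ⟨i, rfl, rfl⟩)))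
lemma aX1Y0 (i : Fin m) : arcRel T (.x1 i) (.y0 i) := Or.inr (Or.inr (Or.inr (Or.inr (Or.inl ⟨i, rfl, rfl⟩))))
lemma aY0Y1 (i : Fin m) : arcRel T (.y0 i) (.y1 i) := Or.inr (Or.inr (Or.inr (Or.inr (Or.inr (Or.inl ⟨i, rfl, rfl⟩)))))
lemma aY1B (i : Fin m) : arcRel T (.y1 i) (.b (T i).2.1) := Or.inr (Or.inr (Or.inr (Or.inr (Or.inr (Or.inr (Or.inl ⟨i, rfl, rfl⟩))))))
lemma aX0Z0 (i : Fin m) : arcRel T (.x0 i) (.z0 i) := Or.inr (Or.inr (Or.inr (Or.inr (Or.inr (Or.inr (Or.inr (Or.inl ⟨i, rfl, rfl⟩)))))))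
lemma aZ0Z1 (i : Fin m) : arcRel T (.z0 i) (.z1 i) := Or.inr (Or.inr (Or.inr (Or.inr (Or.inr (Or.inr (Or.inr (Or.inr (Or.inl ⟨i, rfl, rfl⟩))))))))
lemma aZ1C (i : Fin m) : arcRel T (.z1 i) (.c (T i).2.2) := Or.inr (Or.inr (Or.inr (Or.inr (Or.inr (Or.inr (Or.inr (Or.inr (Or.inr ⟨i, rfl, rfl⟩))))))))

lemma goodPath {v1 v2 v3 : Vtx n m} (h12 : arcRel T v1 v2) (h23 : arcRel T v2 v3)
    (hs : v1 ≠ .s ∧ v2 ≠ .s ∧ v3 ≠ .s) (ht : v1 ≠ .t ∧ v2 ≠ .t ∧ v3 ≠ .t)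
    (hd : v1 ≠ v2 ∧ v1 ≠ v3 ∧ v2 ≠ v3) :
    IsPathFT (arcRel T) .s .t [.s, v1, v2, v3, .t] ∧
      4 + 1 ≤ ([.s, v1, v2, v3, .t] : List (Vtx n m)).length := by
  obtain ⟨h1, h2, h3⟩ := hs; obtain ⟨g1, g2, g3⟩ := ht; obtain ⟨d1, d2, d3⟩ := hd
  refine ⟨⟨⟨by simp, ?_, ?_⟩, rfl, by simp⟩, by simp⟩
  · simp [List.nodup_cons, h1.symm, h2.symm, h3.symm, g1, g2, g3, d1, d2, d3]
  · simp only [List.Chain', List.isChain_cons_cons, List.isChain_singleton, and_true]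
    exact ⟨aS T v1 h1 g1, h12, h23, aT T v3 h3 g3⟩

end arcs


lemma listne {V : Type*} {p q : List V} {s t w : V} (hw : w ∈ p) (hs : w ≠ s) (ht : w ≠ t)
    (h : ∀ x, x ∈ p → x ∈ q → x = s ∨ x = t) : p ≠ q :=
  fun he => (h w hw (he ▸ hw)).elim hs ht

def Qdef {n m : ℕ} (T : Fin m → Fin n × Fin n × Fin n) (S : Finset (Fin m))
    (g : Fin n → Fin m) : (Fin n ⊕ (Fin m ⊕ Fin m)) → List (Vtx n m) := fun k =>
  match k with
  | Sum.inl j => [.s, .x0 (g j), .x1 (g j), .a j, .t]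
  | Sum.inr (Sum.inl i) =>
      if i ∈ S then [.s, .y0 i, .y1 i, .b (T i).2.1, .t]
      else [.s, .x1 i, .y0 i, .y1 i, .t]
  | Sum.inr (Sum.inr i) =>
      if i ∈ S then [.s, .z0 i, .z1 i, .c (T i).2.2, .t]
      else [.s, .x0 i, .z0 i, .z1 i, .t]

set_option maxHeartbeats 3200000 in
theorem fwd {n m : ℕ} (T : Fin m → Fin n × Fin n × Fin n)
    (S : Finset (Fin m)) (hcard : S.card = n)
    (hdisj : ∀ i ∈ S, ∀ j ∈ S, i ≠ j →
        (T i).1 ≠ (T j).1 ∧ (T i).2.1 ≠ (T j).2.1 ∧ (T i).2.2 ≠ (T j).2.2) :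
    SpindleAt (arcRel T) (n + 2 * m) 4 Vtx.s Vtx.t := by
  classical
  have hst : ∀ j : Fin n, ∃ i, i ∈ S ∧ (T i).1 = j := by
    have himg : S.image (fun i => (T i).1) = Finset.univ := by
      apply Finset.eq_univ_of_card
      rw [Finset.card_image_of_injOn, hcard, Fintype.card_fin]
      intro i hi j hj hij
      by_contra hne
      exact (hdisj i hi j hj hne).1 hij
    intro j
    have : j ∈ S.image (fun i => (T i).1) := himg ▸ Finset.mem_univ j
    simpa using this
  choose g hgS hgT using hst
  have hginj : ∀ j j' : Fin n, j ≠ j' → g j ≠ g j' := by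
    intro j j' hne h
    exact hne (by rw [← hgT j, ← hgT j', h])
  let e : Fin (n + 2 * m) ≃ (Fin n ⊕ (Fin m ⊕ Fin m)) :=
    (finCongr (by ring : n + 2 * m = n + (m + m))).trans <|
      finSumFinEquiv.symm.trans <|
        Equiv.sumCongr (Equiv.refl (Fin n)) finSumFinEquiv.symm
  refine ⟨fun k => Qdef T S g (e k), ?_, ?_⟩
  · suffices h : ∀ p, IsPathFT (arcRel T) Vtx.s Vtx.t (Qdef T S g p) ∧
        4 + 1 ≤ (Qdef T S g p).length by exact fun k => h (e k)
    clear e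
    rintro (j | i | i)
    · show IsPathFT _ _ _ [_, _, _, _, _] ∧ 4 + 1 ≤ ([_, _, _, _, _] : List _).length
      have h2 := aX1A T (g j)
      rw [hgT j] at h2
      exact goodPath T (aX0X1 T (g j)) h2 (by simp) (by simp) (by simp)
    · show IsPathFT _ _ _ (if i ∈ S then _ else _) ∧
        4 + 1 ≤ (if i ∈ S then _ else _ : List _).length
      split
      · exact goodPath T (aY0Y1 T i) (aY1B T i) (by simp) (by simp) (by simp)
      · exact goodPath T (aX1Y0 T i) (aY0Y1 T i) (by simp) (by simp) (by simp)
    · show IsPathFT _ _ _ (if i ∈ S then _ else _) ∧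
        4 + 1 ≤ (if i ∈ S then _ else _ : List _).length
      split
      · exact goodPath T (aZ0Z1 T i) (aZ1C T i) (by simp) (by simp) (by simp)
      · exact goodPath T (aX0Z0 T i) (aZ0Z1 T i) (by simp) (by simp) (by simp)
  · suffices h : ∀ p q, p ≠ q → Qdef T S g p ≠ Qdef T S g q ∧
        ∀ x, x ∈ Qdef T S g p → x ∈ Qdef T S g q → x = Vtx.s ∨ x = Vtx.t by
      exact fun k k' hkk => h (e k) (e k') (fun hh => hkk (e.injective hh))
    clear e
    intro p q hpq
    rcases p with j | i | i <;> rcases q with j' | i' | i'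
    · have hjj : j ≠ j' := fun h => hpq (by rw [h])
      have hgg := hginj j j' hjj
      have hmem : ∀ x, x ∈ Qdef T S g (Sum.inl j) → x ∈ Qdef T S g (Sum.inl j') →
          x = Vtx.s ∨ x = Vtx.t := by
        intro x hx hy
        simp only [Qdef, List.mem_cons, List.not_mem_nil, or_false] at hx hy
        rcases hx with rfl|rfl|rfl|rfl|rfl <;> simp_all
      exact ⟨listne (w := Vtx.x0 (g j)) (by simp [Qdef]) (by simp) (by simp) hmem, hmem⟩
    · -- A vs U
      by_cases hi : i' ∈ S
      · have hmem : ∀ x, x ∈ Qdef T S g (Sum.inl j) → x ∈ Qdef T S g (Sum.inr (Sum.inl i')) →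
            x = Vtx.s ∨ x = Vtx.t := by
          intro x hx hy
          simp only [Qdef, if_pos hi, List.mem_cons, List.not_mem_nil, or_false] at hx hy
          rcases hx with rfl|rfl|rfl|rfl|rfl <;> simp_all
        exact ⟨listne (w := Vtx.x0 (g j)) (by simp [Qdef]) (by simp) (by simp) hmem, hmem⟩
      · have hgi : g j ≠ i' := fun h => hi (h ▸ hgS j)
        have hmem : ∀ x, x ∈ Qdef T S g (Sum.inl j) → x ∈ Qdef T S g (Sum.inr (Sum.inl i')) →
            x = Vtx.s ∨ x = Vtx.t := by
          intro x hx hy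
          simp only [Qdef, if_neg hi, List.mem_cons, List.not_mem_nil, or_false] at hx hy
          rcases hx with rfl|rfl|rfl|rfl|rfl <;> simp_all
        exact ⟨listne (w := Vtx.x0 (g j)) (by simp [Qdef]) (by simp) (by simp) hmem, hmem⟩
    · -- A vs W
      by_cases hi : i' ∈ S
      · have hmem : ∀ x, x ∈ Qdef T S g (Sum.inl j) → x ∈ Qdef T S g (Sum.inr (Sum.inr i')) →
            x = Vtx.s ∨ x = Vtx.t := by
          intro x hx hy
          simp only [Qdef, if_pos hi, List.mem_cons, List.not_mem_nil, or_false] at hx hy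
          rcases hx with rfl|rfl|rfl|rfl|rfl <;> simp_all
        exact ⟨listne (w := Vtx.x0 (g j)) (by simp [Qdef]) (by simp) (by simp) hmem, hmem⟩
      · have hgi : g j ≠ i' := fun h => hi (h ▸ hgS j)
        have hmem : ∀ x, x ∈ Qdef T S g (Sum.inl j) → x ∈ Qdef T S g (Sum.inr (Sum.inr i')) →
            x = Vtx.s ∨ x = Vtx.t := by
          intro x hx hy
          simp only [Qdef, if_neg hi, List.mem_cons, List.not_mem_nil, or_false] at hx hy
          rcases hx with rfl|rfl|rfl|rfl|rfl <;> simp_all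
        exact ⟨listne (w := Vtx.x0 (g j)) (by simp [Qdef]) (by simp) (by simp) hmem, hmem⟩
    · -- U vs A
      by_cases hi : i ∈ S
      · have hmem : ∀ x, x ∈ Qdef T S g (Sum.inr (Sum.inl i)) → x ∈ Qdef T S g (Sum.inl j') →
            x = Vtx.s ∨ x = Vtx.t := by
          intro x hx hy
          simp only [Qdef, if_pos hi, List.mem_cons, List.not_mem_nil, or_false] at hx hy
          rcases hx with rfl|rfl|rfl|rfl|rfl <;> simp_all
        exact ⟨listne (w := Vtx.y0 i) (by simp [Qdef, if_pos hi]) (by simp) (by simp) hmem, hmem⟩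
      · have hgi : g j' ≠ i := fun h => hi (h ▸ hgS j')
        have hmem : ∀ x, x ∈ Qdef T S g (Sum.inr (Sum.inl i)) → x ∈ Qdef T S g (Sum.inl j') →
            x = Vtx.s ∨ x = Vtx.t := by
          intro x hx hy
          simp only [Qdef, if_neg hi, List.mem_cons, List.not_mem_nil, or_false] at hx hy
          rcases hx with rfl|rfl|rfl|rfl|rfl <;> simp_all
        exact ⟨listne (w := Vtx.y0 i) (by simp [Qdef, if_neg hi]) (by simp) (by simp) hmem, hmem⟩
    · -- U vs U
      have hii : i ≠ i' := fun h => hpq (by rw [h])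
      by_cases hi : i ∈ S <;> by_cases hi' : i' ∈ S
      · have hb := (hdisj i hi i' hi' hii).2.1
        have hmem : ∀ x, x ∈ Qdef T S g (Sum.inr (Sum.inl i)) → x ∈ Qdef T S g (Sum.inr (Sum.inl i')) →
            x = Vtx.s ∨ x = Vtx.t := by
          intro x hx hy
          simp only [Qdef, if_pos hi, if_pos hi', List.mem_cons, List.not_mem_nil, or_false] at hx hy
          rcases hx with rfl|rfl|rfl|rfl|rfl <;> simp_all
        exact ⟨listne (w := Vtx.y0 i) (by simp [Qdef, if_pos hi]) (by simp) (by simp) hmem, hmem⟩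
      · have hmem : ∀ x, x ∈ Qdef T S g (Sum.inr (Sum.inl i)) → x ∈ Qdef T S g (Sum.inr (Sum.inl i')) →
            x = Vtx.s ∨ x = Vtx.t := by
          intro x hx hy
          simp only [Qdef, if_pos hi, if_neg hi', List.mem_cons, List.not_mem_nil, or_false] at hx hy
          rcases hx with rfl|rfl|rfl|rfl|rfl <;> simp_all
        exact ⟨listne (w := Vtx.y0 i) (by simp [Qdef, if_pos hi]) (by simp) (by simp) hmem, hmem⟩
      · have hmem : ∀ x, x ∈ Qdef T S g (Sum.inr (Sum.inl i)) → x ∈ Qdef T S g (Sum.inr (Sum.inl i')) →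
            x = Vtx.s ∨ x = Vtx.t := by
          intro x hx hy
          simp only [Qdef, if_neg hi, if_pos hi', List.mem_cons, List.not_mem_nil, or_false] at hx hy
          rcases hx with rfl|rfl|rfl|rfl|rfl <;> simp_all
        exact ⟨listne (w := Vtx.y0 i) (by simp [Qdef, if_neg hi]) (by simp) (by simp) hmem, hmem⟩
      · have hmem : ∀ x, x ∈ Qdef T S g (Sum.inr (Sum.inl i)) → x ∈ Qdef T S g (Sum.inr (Sum.inl i')) →
            x = Vtx.s ∨ x = Vtx.t := by
          intro x hx hy
          simp only [Qdef, if_neg hi, if_neg hi', List.mem_cons, List.not_mem_nil, or_false] at hx hy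
          rcases hx with rfl|rfl|rfl|rfl|rfl <;> simp_all
        exact ⟨listne (w := Vtx.y0 i) (by simp [Qdef, if_neg hi]) (by simp) (by simp) hmem, hmem⟩
    · -- U vs W
      by_cases hi : i ∈ S <;> by_cases hi' : i' ∈ S
      · have hmem : ∀ x, x ∈ Qdef T S g (Sum.inr (Sum.inl i)) → x ∈ Qdef T S g (Sum.inr (Sum.inr i')) →
            x = Vtx.s ∨ x = Vtx.t := by
          intro x hx hy
          simp only [Qdef, if_pos hi, if_pos hi', List.mem_cons, List.not_mem_nil, or_false] at hx hy
          rcases hx with rfl|rfl|rfl|rfl|rfl <;> simp_all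
        exact ⟨listne (w := Vtx.y0 i) (by simp [Qdef, if_pos hi]) (by simp) (by simp) hmem, hmem⟩
      · have hmem : ∀ x, x ∈ Qdef T S g (Sum.inr (Sum.inl i)) → x ∈ Qdef T S g (Sum.inr (Sum.inr i')) →
            x = Vtx.s ∨ x = Vtx.t := by
          intro x hx hy
          simp only [Qdef, if_pos hi, if_neg hi', List.mem_cons, List.not_mem_nil, or_false] at hx hy
          rcases hx with rfl|rfl|rfl|rfl|rfl <;> simp_all
        exact ⟨listne (w := Vtx.y0 i) (by simp [Qdef, if_pos hi]) (by simp) (by simp) hmem, hmem⟩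
      · have hmem : ∀ x, x ∈ Qdef T S g (Sum.inr (Sum.inl i)) → x ∈ Qdef T S g (Sum.inr (Sum.inr i')) →
            x = Vtx.s ∨ x = Vtx.t := by
          intro x hx hy
          simp only [Qdef, if_neg hi, if_pos hi', List.mem_cons, List.not_mem_nil, or_false] at hx hy
          rcases hx with rfl|rfl|rfl|rfl|rfl <;> simp_all
        exact ⟨listne (w := Vtx.y0 i) (by simp [Qdef, if_neg hi]) (by simp) (by simp) hmem, hmem⟩
      · have hmem : ∀ x, x ∈ Qdef T S g (Sum.inr (Sum.inl i)) → x ∈ Qdef T S g (Sum.inr (Sum.inr i')) →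
            x = Vtx.s ∨ x = Vtx.t := by
          intro x hx hy
          simp only [Qdef, if_neg hi, if_neg hi', List.mem_cons, List.not_mem_nil, or_false] at hx hy
          rcases hx with rfl|rfl|rfl|rfl|rfl <;> simp_all
        exact ⟨listne (w := Vtx.y0 i) (by simp [Qdef, if_neg hi]) (by simp) (by simp) hmem, hmem⟩
    · -- W vs A
      by_cases hi : i ∈ S
      · have hmem : ∀ x, x ∈ Qdef T S g (Sum.inr (Sum.inr i)) → x ∈ Qdef T S g (Sum.inl j') →
            x = Vtx.s ∨ x = Vtx.t := by
          intro x hx hy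
          simp only [Qdef, if_pos hi, List.mem_cons, List.not_mem_nil, or_false] at hx hy
          rcases hx with rfl|rfl|rfl|rfl|rfl <;> simp_all
        exact ⟨listne (w := Vtx.z0 i) (by simp [Qdef, if_pos hi]) (by simp) (by simp) hmem, hmem⟩
      · have hgi : g j' ≠ i := fun h => hi (h ▸ hgS j')
        have hmem : ∀ x, x ∈ Qdef T S g (Sum.inr (Sum.inr i)) → x ∈ Qdef T S g (Sum.inl j') →
            x = Vtx.s ∨ x = Vtx.t := by
          intro x hx hy
          simp only [Qdef, if_neg hi, List.mem_cons, List.not_mem_nil, or_false] at hx hy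
          rcases hx with rfl|rfl|rfl|rfl|rfl <;> simp_all
        exact ⟨listne (w := Vtx.z0 i) (by simp [Qdef, if_neg hi]) (by simp) (by simp) hmem, hmem⟩
    · -- W vs U
      by_cases hi : i ∈ S <;> by_cases hi' : i' ∈ S
      · have hmem : ∀ x, x ∈ Qdef T S g (Sum.inr (Sum.inr i)) → x ∈ Qdef T S g (Sum.inr (Sum.inl i')) →
            x = Vtx.s ∨ x = Vtx.t := by
          intro x hx hy
          simp only [Qdef, if_pos hi, if_pos hi', List.mem_cons, List.not_mem_nil, or_false] at hx hy
          rcases hx with rfl|rfl|rfl|rfl|rfl <;> simp_all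
        exact ⟨listne (w := Vtx.z0 i) (by simp [Qdef, if_pos hi]) (by simp) (by simp) hmem, hmem⟩
      · have hmem : ∀ x, x ∈ Qdef T S g (Sum.inr (Sum.inr i)) → x ∈ Qdef T S g (Sum.inr (Sum.inl i')) →
            x = Vtx.s ∨ x = Vtx.t := by
          intro x hx hy
          simp only [Qdef, if_pos hi, if_neg hi', List.mem_cons, List.not_mem_nil, or_false] at hx hy
          rcases hx with rfl|rfl|rfl|rfl|rfl <;> simp_all
        exact ⟨listne (w := Vtx.z0 i) (by simp [Qdef, if_pos hi]) (by simp) (by simp) hmem, hmem⟩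
      · have hmem : ∀ x, x ∈ Qdef T S g (Sum.inr (Sum.inr i)) → x ∈ Qdef T S g (Sum.inr (Sum.inl i')) →
            x = Vtx.s ∨ x = Vtx.t := by
          intro x hx hy
          simp only [Qdef, if_neg hi, if_pos hi', List.mem_cons, List.not_mem_nil, or_false] at hx hy
          rcases hx with rfl|rfl|rfl|rfl|rfl <;> simp_all
        exact ⟨listne (w := Vtx.z0 i) (by simp [Qdef, if_neg hi]) (by simp) (by simp) hmem, hmem⟩
      · have hmem : ∀ x, x ∈ Qdef T S g (Sum.inr (Sum.inr i)) → x ∈ Qdef T S g (Sum.inr (Sum.inl i')) →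
            x = Vtx.s ∨ x = Vtx.t := by
          intro x hx hy
          simp only [Qdef, if_neg hi, if_neg hi', List.mem_cons, List.not_mem_nil, or_false] at hx hy
          rcases hx with rfl|rfl|rfl|rfl|rfl <;> simp_all
        exact ⟨listne (w := Vtx.z0 i) (by simp [Qdef, if_neg hi]) (by simp) (by simp) hmem, hmem⟩
    · -- W vs W
      have hii : i ≠ i' := fun h => hpq (by rw [h])
      by_cases hi : i ∈ S <;> by_cases hi' : i' ∈ S
      · have hc := (hdisj i hi i' hi' hii).2.2
        have hmem : ∀ x, x ∈ Qdef T S g (Sum.inr (Sum.inr i)) → x ∈ Qdef T S g (Sum.inr (Sum.inr i')) →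
            x = Vtx.s ∨ x = Vtx.t := by
          intro x hx hy
          simp only [Qdef, if_pos hi, if_pos hi', List.mem_cons, List.not_mem_nil, or_false] at hx hy
          rcases hx with rfl|rfl|rfl|rfl|rfl <;> simp_all
        exact ⟨listne (w := Vtx.z0 i) (by simp [Qdef, if_pos hi]) (by simp) (by simp) hmem, hmem⟩
      · have hmem : ∀ x, x ∈ Qdef T S g (Sum.inr (Sum.inr i)) → x ∈ Qdef T S g (Sum.inr (Sum.inr i')) →
            x = Vtx.s ∨ x = Vtx.t := by
          intro x hx hy
          simp only [Qdef, if_pos hi, if_neg hi', List.mem_cons, List.not_mem_nil, or_false] at hx hy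
          rcases hx with rfl|rfl|rfl|rfl|rfl <;> simp_all
        exact ⟨listne (w := Vtx.z0 i) (by simp [Qdef, if_pos hi]) (by simp) (by simp) hmem, hmem⟩
      · have hmem : ∀ x, x ∈ Qdef T S g (Sum.inr (Sum.inr i)) → x ∈ Qdef T S g (Sum.inr (Sum.inr i')) →
            x = Vtx.s ∨ x = Vtx.t := by
          intro x hx hy
          simp only [Qdef, if_neg hi, if_pos hi', List.mem_cons, List.not_mem_nil, or_false] at hx hy
          rcases hx with rfl|rfl|rfl|rfl|rfl <;> simp_all
        exact ⟨listne (w := Vtx.z0 i) (by simp [Qdef, if_neg hi]) (by simp) (by simp) hmem, hmem⟩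
      · have hmem : ∀ x, x ∈ Qdef T S g (Sum.inr (Sum.inr i)) → x ∈ Qdef T S g (Sum.inr (Sum.inr i')) →
            x = Vtx.s ∨ x = Vtx.t := by
          intro x hx hy
          simp only [Qdef, if_neg hi, if_neg hi', List.mem_cons, List.not_mem_nil, or_false] at hx hy
          rcases hx with rfl|rfl|rfl|rfl|rfl <;> simp_all
        exact ⟨listne (w := Vtx.z0 i) (by simp [Qdef, if_neg hi]) (by simp) (by simp) hmem, hmem⟩

lemma list_len5 {V : Type*} {p : List V} (h : p.length = 5) :
    ∃ a b c d e, p = [a, b, c, d, e] := by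
  rcases p with _ | ⟨a, p⟩; · simp at h
  rcases p with _ | ⟨b, p⟩; · simp at h
  rcases p with _ | ⟨c, p⟩; · simp at h
  rcases p with _ | ⟨d, p⟩; · simp at h
  rcases p with _ | ⟨e, p⟩; · simp at h
  rcases p with _ | ⟨f, p⟩
  · exact ⟨a, b, c, d, e, rfl⟩
  · simp [List.length] at h

theorem bwd {n m : ℕ} (hn : 1 ≤ n) (T : Fin m → Fin n × Fin n × Fin n) (u v : Vtx n m)
    (h : SpindleAt (arcRel T) (n + 2 * m) 4 u v) :
    ∃ S : Finset (Fin m), S.card = n ∧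
      ∀ i ∈ S, ∀ j ∈ S, i ≠ j →
        (T i).1 ≠ (T j).1 ∧ (T i).2.1 ≠ (T j).2.1 ∧ (T i).2.2 ≠ (T j).2.2 := by
  classical
  obtain ⟨P, hP, hdisj⟩ := h
  have hNk : 0 < n + 2 * m := by omega
  set k0 : Fin (n + 2 * m) := ⟨0, hNk⟩ with hk0
  -- u ≠ v
  have huv : u ≠ v := by
    obtain ⟨⟨⟨hne, hnd, _⟩, hhd, hlast⟩, hlen⟩ := hP k0
    rcases hp : P k0 with _ | ⟨a, tl⟩
    · rw [hp] at hlen; simp at hlen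
    rw [hp] at hhd hlast hnd hlen
    have ha : a = u := by simpa using hhd
    subst ha
    have htl : tl ≠ [] := by
      rcases tl with _ | _
      · simp at hlen
      · simp
    intro huv0
    have hv := List.mem_getLast?_eq_getLast (l := a :: tl) (x := v) hlast
    obtain ⟨hne2, hv⟩ := hv
    rw [List.getLast_cons htl] at hv
    have : v ∈ tl := hv ▸ List.getLast_mem htl
    rw [← huv0] at this
    exact (List.nodup_cons.mp hnd).1 this
  -- internal vertex sets
  have hI3 : ∀ k, 3 ≤ ((P k).toFinset \ {u, v}).card := by
    intro k
    obtain ⟨⟨⟨_, hnd, _⟩, _, _⟩, hlen⟩ := hP k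
    have h1 : (P k).toFinset.card = (P k).length := List.toFinset_card_of_nodup hnd
    have h2 := Finset.le_card_sdiff ({u, v} : Finset (Vtx n m)) (P k).toFinset
    have h3 : ({u, v} : Finset (Vtx n m)).card ≤ 2 :=
      (Finset.card_insert_le _ _).trans (by simp)
    omega
  have hIdisj : ∀ k ∈ Finset.univ, ∀ k' ∈ Finset.univ, k ≠ k' →
      Disjoint ((P k).toFinset \ {u, v}) ((P k').toFinset \ {u, v}) := by
    intro k _ k' _ hkk
    rw [Finset.disjoint_left]
    intro x hx hx'
    rw [Finset.mem_sdiff, List.mem_toFinset] at hx hx'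
    rcases (hdisj k k' hkk).2 x hx.1 hx'.1 with rfl | rfl
    · exact hx.2 (by simp)
    · exact hx.2 (by simp)
  have hcardbi := Finset.card_biUnion hIdisj
  have hsub : Finset.univ.biUnion (fun k => (P k).toFinset \ {u, v}) ⊆
      Finset.univ \ {u, v} := by
    intro x hx
    rw [Finset.mem_biUnion] at hx
    obtain ⟨k, _, hk⟩ := hx
    rw [Finset.mem_sdiff] at hk ⊢
    exact ⟨Finset.mem_univ x, hk.2⟩
  have hDcard : (Finset.univ \ {u, v} : Finset (Vtx n m)).card = 3 * n + 6 * m := by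
    rw [Finset.card_sdiff_of_subset (by simp), Finset.card_pair huv, Finset.card_univ, vtx_card]
    omega
  have hsumle : ∑ k, ((P k).toFinset \ {u, v}).card ≤ 3 * n + 6 * m := by
    rw [← hcardbi, ← hDcard]
    exact Finset.card_le_card hsub
  have hsumge : (n + 2 * m) * 3 ≤ ∑ k, ((P k).toFinset \ {u, v}).card := by
    have := Finset.card_nsmul_le_sum Finset.univ
      (fun k => ((P k).toFinset \ {u, v}).card) 3 (fun k _ => hI3 k)
    simpa [Finset.card_univ, mul_comm] using this
  have hIeq : ∀ k, ((P k).toFinset \ {u, v}).card = 3 := by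
    intro k
    by_contra hne4
    have h4 : 4 ≤ ((P k).toFinset \ {u, v}).card := by
      have := hI3 k; omega
    have hsplit : ((P k).toFinset \ {u, v}).card +
        ∑ k' ∈ Finset.univ.erase k, ((P k').toFinset \ {u, v}).card =
        ∑ k', ((P k').toFinset \ {u, v}).card :=
      Finset.add_sum_erase Finset.univ
        (fun k => ((P k).toFinset \ {u, v}).card) (Finset.mem_univ k)
    have herase : ((Finset.univ : Finset (Fin (n + 2 * m))).erase k).card * 3 ≤
        ∑ k' ∈ Finset.univ.erase k, ((P k').toFinset \ {u, v}).card := by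
      have := Finset.card_nsmul_le_sum (Finset.univ.erase k)
        (fun k' => ((P k').toFinset \ {u, v}).card) 3 (fun k' _ => hI3 k')
      simpa [mul_comm] using this
    rw [Finset.card_erase_of_mem (Finset.mem_univ k), Finset.card_univ,
      Fintype.card_fin] at herase
    omega
  have hsum3 : ∑ k, ((P k).toFinset \ {u, v}).card = 3 * (n + 2 * m) := by
    simp [hIeq, Finset.sum_const, Finset.card_univ, mul_comm]
  have hbieq : Finset.univ.biUnion (fun k => (P k).toFinset \ {u, v}) =
      Finset.univ \ {u, v} := by
    apply Finset.eq_of_subset_of_card_le hsub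
    rw [hcardbi, hsum3, hDcard]
    omega
  have hlen5 : ∀ k, (P k).length = 5 := by
    intro k
    obtain ⟨⟨⟨_, hnd, _⟩, _, _⟩, hlen⟩ := hP k
    have h1 : (P k).toFinset.card = (P k).length := List.toFinset_card_of_nodup hnd
    have h2 : (P k).toFinset ⊆ ((P k).toFinset \ {u, v}) ∪ {u, v} := by
      intro x hx
      rw [Finset.mem_union, Finset.mem_sdiff]
      by_cases hxu : x ∈ ({u, v} : Finset (Vtx n m))
      · exact Or.inr hxu
      · exact Or.inl ⟨hx, hxu⟩
    have h3 := (Finset.card_le_card h2).trans (Finset.card_union_le _ _)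
    have h4 : ({u, v} : Finset (Vtx n m)).card ≤ 2 :=
      (Finset.card_insert_le _ _).trans (by simp)
    have h5 := hIeq k
    omega
  -- shape
  have hshape : ∀ k, ∃ w1 w2 w3, P k = [u, w1, w2, w3, v] := by
    intro k
    obtain ⟨⟨⟨_, _, _⟩, hhd, hlast⟩, _⟩ := hP k
    obtain ⟨a, b, c, d, e, hp⟩ := list_len5 (hlen5 k)
    rw [hp] at hhd hlast
    have ha : a = u := by simpa using hhd
    have he : e = v := by simpa [List.getLast?] using hlast
    exact ⟨b, c, d, by rw [hp, ha, he]⟩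
  choose w1 w2 w3 hw using hshape
  have hwne : ∀ k, w1 k ≠ u ∧ w2 k ≠ u ∧ w3 k ≠ u ∧ w1 k ≠ v ∧ w2 k ≠ v ∧ w3 k ≠ v ∧
      w1 k ≠ w2 k ∧ w1 k ≠ w3 k ∧ w2 k ≠ w3 k := by
    intro k
    have hnd := (hP k).1.1.2.1
    rw [hw k] at hnd
    simp only [List.nodup_cons, List.mem_cons, List.not_mem_nil, or_false,
      List.mem_singleton, not_or, List.nodup_nil, and_true] at hnd
    refine ⟨?_, ?_, ?_, ?_, ?_, ?_, ?_, ?_, ?_⟩ <;> tauto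
  have harc : ∀ k, arcRel T u (w1 k) ∧ arcRel T (w1 k) (w2 k) ∧
      arcRel T (w2 k) (w3 k) ∧ arcRel T (w3 k) v := by
    intro k
    have hch := (hP k).1.1.2.2
    rw [hw k] at hch
    simp only [List.Chain', List.isChain_cons_cons, List.isChain_singleton, and_true] at hch
    exact hch
  have hmemP : ∀ k x, x ∈ P k ↔ (x = u ∨ x = w1 k ∨ x = w2 k ∨ x = w3 k ∨ x = v) := by
    intro k x; rw [hw k]; simp
  have hcov : ∀ x : Vtx n m, x ≠ u → x ≠ v → ∃ k, x = w1 k ∨ x = w2 k ∨ x = w3 k := by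
    intro x hxu hxv
    have hx : x ∈ Finset.univ \ ({u, v} : Finset (Vtx n m)) := by
      rw [Finset.mem_sdiff]
      simp [hxu, hxv]
    rw [← hbieq, Finset.mem_biUnion] at hx
    obtain ⟨k, _, hk⟩ := hx
    rw [Finset.mem_sdiff, List.mem_toFinset, hmemP] at hk
    refine ⟨k, ?_⟩
    rcases hk.1 with h | h | h | h | h
    · exact absurd h hxu
    · exact Or.inl h
    · exact Or.inr (Or.inl h)
    · exact Or.inr (Or.inr h)
    · exact absurd h hxv
  have huniq : ∀ k k' x, (x = w1 k ∨ x = w2 k ∨ x = w3 k) →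
      (x = w1 k' ∨ x = w2 k' ∨ x = w3 k') → k = k' := by
    intro k k' x h1 h2
    by_contra hkk
    have h3 := (hdisj k k' hkk).2 x ((hmemP k x).2 (by tauto)) ((hmemP k' x).2 (by tauto))
    have h4 := hwne k
    rcases h1 with rfl | rfl | rfl <;> rcases h3 with h3 | h3 <;> tauto
  -- u = s
  have hus : u = Vtx.s := by
    by_contra hus
    have hvs : v ≠ Vtx.s := no_into_s T (harc k0).2.2.2
    obtain ⟨k, hk⟩ := hcov Vtx.s (fun h => hus h.symm) (fun h => hvs h.symm)
    rcases hk with hk | hk | hk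
    · exact no_into_s T (harc k).1 hk.symm
    · exact no_into_s T (harc k).2.1 hk.symm
    · exact no_into_s T (harc k).2.2.1 hk.symm
  have hvt : v = Vtx.t := by
    by_contra hvt
    have hut : u ≠ Vtx.t := no_out_t T (harc k0).1
    obtain ⟨k, hk⟩ := hcov Vtx.t (fun h => hut h.symm) (fun h => hvt h.symm)
    rcases hk with hk | hk | hk
    · exact no_out_t T (harc k).2.1 hk.symm
    · exact no_out_t T (harc k).2.2.1 hk.symm
    · exact no_out_t T (harc k).2.2.2 hk.symm
  subst hus hvt
  -- gadget chains
  have hcls : ∀ k,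
      (∃ i, w1 k = .x0 i ∧ w2 k = .x1 i ∧ w3 k = .a (T i).1) ∨
      (∃ i, w1 k = .x0 i ∧ w2 k = .x1 i ∧ w3 k = .y0 i) ∨
      (∃ i, w1 k = .x1 i ∧ w2 k = .y0 i ∧ w3 k = .y1 i) ∨
      (∃ i, w1 k = .y0 i ∧ w2 k = .y1 i ∧ w3 k = .b (T i).2.1) ∨
      (∃ i, w1 k = .x0 i ∧ w2 k = .z0 i ∧ w3 k = .z1 i) ∨
      (∃ i, w1 k = .z0 i ∧ w2 k = .z1 i ∧ w3 k = .c (T i).2.2) := by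
    intro k
    have h4 := hwne k
    exact chain_class
      (arc_gad (harc k).2.1 h4.1 h4.2.2.2.2.1)
      (arc_gad (harc k).2.2.1 h4.2.1 h4.2.2.2.2.2.1)
  -- every a-element is covered by a selected chain
  have hacov : ∀ p : Fin n, ∃ i,
      (∃ k, w1 k = .x0 i ∧ w2 k = .x1 i ∧ w3 k = .a (T i).1) ∧ (T i).1 = p := by
    intro p
    obtain ⟨k, hk⟩ := hcov (.a p) (by simp) (by simp)
    rcases hk with hk | hk | hk
    · rcases hcls k with ⟨j,g,_,_⟩|⟨j,g,_,_⟩|⟨j,g,_,_⟩|⟨j,g,_,_⟩|⟨j,g,_,_⟩|⟨j,g,_,_⟩ <;>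
        exact absurd (hk.trans g) (by simp)
    · rcases hcls k with ⟨j,_,g,_⟩|⟨j,_,g,_⟩|⟨j,_,g,_⟩|⟨j,_,g,_⟩|⟨j,_,g,_⟩|⟨j,_,g,_⟩ <;>
        exact absurd (hk.trans g) (by simp)
    · rcases hcls k with ⟨j,g1,g2,g3⟩|⟨j,g1,g2,g3⟩|⟨j,g1,g2,g3⟩|⟨j,g1,g2,g3⟩|⟨j,g1,g2,g3⟩|⟨j,g1,g2,g3⟩
      · have hpj : (T j).1 = p := by
          have h5 := hk.trans g3
          simp only [Vtx.a.injEq] at h5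
          exact h5.symm
        exact ⟨j, ⟨k, g1, g2, g3⟩, hpj⟩
      all_goals exact absurd (hk.trans g3) (by simp)
  -- selected triples get their y- and z-chains
  have hY : ∀ i k, w1 k = .x0 i → w2 k = .x1 i →
      ∃ k', w1 k' = .y0 i ∧ w2 k' = .y1 i ∧ w3 k' = .b (T i).2.1 := by
    intro i k h1 h2
    obtain ⟨k', hk⟩ := hcov (.y1 i) (by simp) (by simp)
    rcases hk with hk | hk | hk
    · rcases hcls k' with ⟨j,g,_,_⟩|⟨j,g,_,_⟩|⟨j,g,_,_⟩|⟨j,g,_,_⟩|⟨j,g,_,_⟩|⟨j,g,_,_⟩ <;>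
        exact absurd (hk.trans g) (by simp)
    · rcases hcls k' with ⟨j,g1,g2,g3⟩|⟨j,g1,g2,g3⟩|⟨j,g1,g2,g3⟩|⟨j,g1,g2,g3⟩|⟨j,g1,g2,g3⟩|⟨j,g1,g2,g3⟩
      · exact absurd (hk.trans g2) (by simp)
      · exact absurd (hk.trans g2) (by simp)
      · exact absurd (hk.trans g2) (by simp)
      · obtain rfl : j = i := by
          have h5 := hk.trans g2
          simp only [Vtx.y1.injEq] at h5
          exact h5.symm
        exact ⟨k', g1, g2, g3⟩
      · exact absurd (hk.trans g2) (by simp)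
      · exact absurd (hk.trans g2) (by simp)
    · rcases hcls k' with ⟨j,g1,g2,g3⟩|⟨j,g1,g2,g3⟩|⟨j,g1,g2,g3⟩|⟨j,g1,g2,g3⟩|⟨j,g1,g2,g3⟩|⟨j,g1,g2,g3⟩
      · exact absurd (hk.trans g3) (by simp)
      · exact absurd (hk.trans g3) (by simp)
      · obtain rfl : j = i := by
          have h5 := hk.trans g3
          simp only [Vtx.y1.injEq] at h5
          exact h5.symm
        have hkk : k = k' := huniq k k' (.x1 j) (Or.inr (Or.inl h2.symm)) (Or.inl g1.symm)
        subst hkk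
        exact absurd (h1.symm.trans g1) (by simp)
      · exact absurd (hk.trans g3) (by simp)
      · exact absurd (hk.trans g3) (by simp)
      · exact absurd (hk.trans g3) (by simp)
  have hZ : ∀ i k, w1 k = .x0 i → w2 k = .x1 i →
      ∃ k', w1 k' = .z0 i ∧ w2 k' = .z1 i ∧ w3 k' = .c (T i).2.2 := by
    intro i k h1 h2
    obtain ⟨k', hk⟩ := hcov (.z1 i) (by simp) (by simp)
    rcases hk with hk | hk | hk
    · rcases hcls k' with ⟨j,g,_,_⟩|⟨j,g,_,_⟩|⟨j,g,_,_⟩|⟨j,g,_,_⟩|⟨j,g,_,_⟩|⟨j,g,_,_⟩ <;>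
        exact absurd (hk.trans g) (by simp)
    · rcases hcls k' with ⟨j,g1,g2,g3⟩|⟨j,g1,g2,g3⟩|⟨j,g1,g2,g3⟩|⟨j,g1,g2,g3⟩|⟨j,g1,g2,g3⟩|⟨j,g1,g2,g3⟩
      · exact absurd (hk.trans g2) (by simp)
      · exact absurd (hk.trans g2) (by simp)
      · exact absurd (hk.trans g2) (by simp)
      · exact absurd (hk.trans g2) (by simp)
      · exact absurd (hk.trans g2) (by simp)
      · obtain rfl : j = i := by
          have h5 := hk.trans g2
          simp only [Vtx.z1.injEq] at h5
          exact h5.symm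
        exact ⟨k', g1, g2, g3⟩
    · rcases hcls k' with ⟨j,g1,g2,g3⟩|⟨j,g1,g2,g3⟩|⟨j,g1,g2,g3⟩|⟨j,g1,g2,g3⟩|⟨j,g1,g2,g3⟩|⟨j,g1,g2,g3⟩
      · exact absurd (hk.trans g3) (by simp)
      · exact absurd (hk.trans g3) (by simp)
      · exact absurd (hk.trans g3) (by simp)
      · exact absurd (hk.trans g3) (by simp)
      · obtain rfl : j = i := by
          have h5 := hk.trans g3
          simp only [Vtx.z1.injEq] at h5
          exact h5.symm
        have hkk : k = k' := huniq k k' (.x0 j) (Or.inl h1.symm) (Or.inl g1.symm)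
        subst hkk
        exact absurd (h2.symm.trans g2) (by simp)
      · exact absurd (hk.trans g3) (by simp)
  -- the selected set
  set S' : Finset (Fin m) := Finset.univ.filter
    (fun i => ∃ k, w1 k = .x0 i ∧ w2 k = .x1 i ∧ w3 k = .a (T i).1) with hS'
  have hmemS' : ∀ i, i ∈ S' ↔ ∃ k, w1 k = .x0 i ∧ w2 k = .x1 i ∧ w3 k = .a (T i).1 := by
    intro i
    rw [hS', Finset.mem_filter]
    simp
  have hfinj : ∀ i ∈ S', ∀ j ∈ S', (T i).1 = (T j).1 → i = j := by
    intro i hi j hj hij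
    obtain ⟨ki, hi1, hi2, hi3⟩ := (hmemS' i).1 hi
    obtain ⟨kj, hj1, hj2, hj3⟩ := (hmemS' j).1 hj
    have hkk : ki = kj := huniq ki kj (.a (T i).1)
      (Or.inr (Or.inr hi3.symm)) (Or.inr (Or.inr (by rw [hij]; exact hj3.symm)))
    subst hkk
    have h5 := hi1.symm.trans hj1
    simpa using h5
  have hcardS : S'.card = n := by
    have himg : S'.image (fun i => (T i).1) = Finset.univ := by
      apply Finset.eq_univ_iff_forall.mpr
      intro p
      rw [Finset.mem_image]
      obtain ⟨i, hi, hp⟩ := hacov p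
      exact ⟨i, (hmemS' i).2 hi, hp⟩
    have h6 := Finset.card_image_of_injOn (s := S') (f := fun i => (T i).1)
      (fun i hi j hj h => hfinj i (Finset.mem_coe.mp hi) j (Finset.mem_coe.mp hj) h)
    rw [himg, Finset.card_univ, Fintype.card_fin] at h6
    exact h6.symm
  refine ⟨S', hcardS, ?_⟩
  intro i hi j hj hij
  obtain ⟨ki, hi1, hi2, hi3⟩ := (hmemS' i).1 hi
  obtain ⟨kj, hj1, hj2, hj3⟩ := (hmemS' j).1 hj
  refine ⟨fun h => hij (hfinj i hi j hj h), ?_, ?_⟩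
  · intro hb
    obtain ⟨ki', hy1, hy2, hy3⟩ := hY i ki hi1 hi2
    obtain ⟨kj', hz1, hz2, hz3⟩ := hY j kj hj1 hj2
    have hkk : ki' = kj' := huniq ki' kj' (.b (T i).2.1)
      (Or.inr (Or.inr hy3.symm)) (Or.inr (Or.inr (by rw [hb]; exact hz3.symm)))
    subst hkk
    exact hij (by have h5 := hy1.symm.trans hz1; simpa using h5)
  · intro hc
    obtain ⟨ki', hy1, hy2, hy3⟩ := hZ i ki hi1 hi2
    obtain ⟨kj', hz1, hz2, hz3⟩ := hZ j kj hj1 hj2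
    have hkk : ki' = kj' := huniq ki' kj' (.c (T i).2.2)
      (Or.inr (Or.inr hy3.symm)) (Or.inr (Or.inr (by rw [hc]; exact hz3.symm)))
    subst hkk
    exact hij (by have h5 := hy1.symm.trans hz1; simpa using h5)


theorem stmt11 {n m : ℕ} (hn : 1 ≤ n) (T : Fin m → Fin n × Fin n × Fin n)
    (hT : Function.Injective T) :
    (∃ S : Finset (Fin m), S.card = n ∧
      ∀ i ∈ S, ∀ j ∈ S, i ≠ j →
        (T i).1 ≠ (T j).1 ∧ (T i).2.1 ≠ (T j).2.1 ∧ (T i).2.2 ≠ (T j).2.2) ↔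
    (∃ u v, SpindleAt (arcRel T) (n + 2 * m) 4 u v) := by
  constructor
  · rintro ⟨S, h1, h2⟩
    exact ⟨.s, .t, fwd T S h1 h2⟩
  · rintro ⟨u, v, h⟩
    exact bwd hn T u v h
end

section
/- Let G be a digraph on n ≥ 2 vertices and let s ≠ t be vertices of G. Let G' be the digraph obtained from G by deleting all arcs with head s and all arcs with tail t, and then adding one new vertex w together with the arcs (s,w) and (w,t). Then G has a Hamiltonian (s,t)-path if and only if there exist integers ℓ_1, ℓ_2 with min{ℓ_1,ℓ_2} ≥ 1 and ℓ_1+ℓ_2 = n+1 such that G' contains a subdivision of a (ℓ_1,ℓ_2)-spindle. -/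
/-- The digraph with arc relation `A` contains a subdivision of an `(l1,l2)`-spindle:
two internally vertex-disjoint `(u,v)`-paths of lengths (numbers of arcs) at least
`l1` and at least `l2`, respectively. -/
def ContainsSpindle2 {V : Type*} (A : V → V → Prop) (l1 l2 : ℕ) : Prop :=
  ∃ u v p1 p2, IsPathFT A u v p1 ∧ IsPathFT A u v p2 ∧
    l1 + 1 ≤ p1.length ∧ l2 + 1 ≤ p2.length ∧ p1 ≠ p2 ∧
    ∀ x, x ∈ p1 → x ∈ p2 → x = u ∨ x = v

/-- The digraph `G'` obtained from `G` (arc relation `A`) by deleting all arcs with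
head `s` and all arcs with tail `t`, and adding a new vertex `w = none` together with
the arcs `(s, w)` and `(w, t)`.  Original vertices are `some v`. -/
def adjAddMid {V : Type*} (A : V → V → Prop) (s t : V) :
    Option V → Option V → Prop
  | some a, some b => A a b ∧ b ≠ s ∧ a ≠ t
  | some a, none => a = s
  | none, some b => b = t
  | none, none => False

section Helpers
variable {α : Type*} {R : α → α → Prop}

lemma exists_pred_aux : ∀ {l : List α} {a : α}, List.Chain' R (a :: l) →
    ∀ x ∈ l, ∃ b, R b x := by
  intro l
  induction l with
  | nil => simp
  | cons c l ih =>
    intro a h x hx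
    rw [List.Chain', List.isChain_cons_cons] at h
    rcases List.mem_cons.mp hx with rfl | hx
    · exact ⟨a, h.1⟩
    · exact ih h.2 x hx

lemma exists_pred {l : List α} {x : α} (h : List.Chain' R l) (hx : x ∈ l)
    (hhead : l.head? ≠ some x) : ∃ b, R b x := by
  cases l with
  | nil => simp at hx
  | cons a m =>
    rcases List.mem_cons.mp hx with rfl | hx
    · simp at hhead
    · exact exists_pred_aux h x hx

lemma exists_succ {l : List α} {x : α} (h : List.Chain' R l) (hx : x ∈ l)
    (hlast : l.getLast? ≠ some x) : ∃ b, R x b := by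
  have hrev : List.Chain' (flip R) l.reverse := List.isChain_reverse.2 (by simpa [flip, List.Chain'] using h)
  have hx' : x ∈ l.reverse := by simpa using hx
  have : l.reverse.head? ≠ some x := by rwa [List.head?_reverse]
  exact exists_pred hrev hx' this
end Helpers

section Mid
variable {V : Type*} {A : V → V → Prop} {s t : V}

lemma no_in_s (hst : s ≠ t) : ∀ a, ¬ adjAddMid A s t a (some s) := by
  intro a h
  cases a with
  | none => exact hst h
  | some a => exact h.2.1 rfl

lemma no_out_t_s12 (hst : s ≠ t) : ∀ b, ¬ adjAddMid A s t (some t) b := by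
  intro b h
  cases b with
  | none => exact hst h.symm
  | some b => exact h.2.2 rfl

lemma in_none {a : Option V} (h : adjAddMid A s t a none) : a = some s := by
  cases a with
  | none => exact absurd h (by simp [adjAddMid])
  | some a => exact congrArg some h

lemma out_none {b : Option V} (h : adjAddMid A s t none b) : b = some t := by
  cases b with
  | none => exact absurd h (by simp [adjAddMid])
  | some b => exact congrArg some h

lemma s_head (hst : s ≠ t) {u v : Option V} {p : List (Option V)}
    (hp : IsPathFT (adjAddMid A s t) u v p) (hs : some s ∈ p) : u = some s := by
  by_contra h
  have hhead : p.head? ≠ some (some s) := by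
    rw [hp.2.1]; exact fun hh => h (by injection hh)
  obtain ⟨b, hb⟩ := exists_pred hp.1.2.2 hs hhead
  exact no_in_s hst b hb

lemma t_last (hst : s ≠ t) {u v : Option V} {p : List (Option V)}
    (hp : IsPathFT (adjAddMid A s t) u v p) (ht : some t ∈ p) : v = some t := by
  by_contra h
  have hlast : p.getLast? ≠ some (some t) := by
    rw [hp.2.2]; exact fun hh => h (by injection hh)
  obtain ⟨b, hb⟩ := exists_succ hp.1.2.2 ht hlast
  exact no_out_t_s12 hst b hb

lemma adj_flip : flip (adjAddMid A s t) = adjAddMid (flip A) t s := by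
  funext a b
  cases a <;> cases b <;> simp [flip, adjAddMid] <;> tauto

lemma pathFT_reverse {R : Option V → Option V → Prop} {u v : Option V} {p : List (Option V)}
    (hp : IsPathFT R u v p) : IsPathFT (flip R) v u p.reverse := by
  obtain ⟨⟨hne, hnd, hch⟩, hhd, hlst⟩ := hp
  refine ⟨⟨by simpa using hne, by simpa using hnd, ?_⟩, ?_, ?_⟩
  · exact List.isChain_reverse.2 (by simpa [flip, List.Chain'] using hch)
  · rwa [List.head?_reverse]
  · rwa [List.getLast?_reverse]

/-- A path starting at `none` with at least two vertices is `[none, some t]`. -/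
lemma start_none (hst : s ≠ t) {v : Option V} {p : List (Option V)}
    (hp : IsPathFT (adjAddMid A s t) none v p) (hl : 2 ≤ p.length) :
    p = [none, some t] := by
  obtain ⟨⟨hne, hnd, hch⟩, hhd, hlst⟩ := hp
  cases p with
  | nil => simp at hne
  | cons a m =>
    have ha : a = none := by injection hhd
    subst ha
    cases m with
    | nil => simp at hl
    | cons x r =>
      have hch' := hch
      rw [List.Chain', List.isChain_cons_cons] at hch'
      have hx : x = some t := out_none hch'.1
      subst hx
      have hv : v = some t :=
        t_last hst ⟨⟨by simp, hnd, hch⟩, hhd, hlst⟩ (by simp)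
      subst hv
      have hr : r = [] := by
        by_contra hr
        have h1 : (none :: some t :: r).getLast (by simp) = r.getLast hr := by
          rw [List.getLast_cons (by simp), List.getLast_cons hr]
        have h2 : (none :: some t :: r).getLast? = some (r.getLast hr) := by
          rw [List.getLast?_eq_getLast_of_ne_nil (by simp), h1]
        rw [h2] at hlst
        have h3 : r.getLast hr = some t := by injection hlst
        have hmem : some t ∈ r := h3 ▸ List.getLast_mem hr
        simp at hnd
        exact hnd.2.1 hmem
      simp [hr]

lemma end_none (hst : s ≠ t) {u : Option V} {p : List (Option V)}
    (hp : IsPathFT (adjAddMid A s t) u none p) (hl : 2 ≤ p.length) :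
    p = [some s, none] := by
  have hrev : IsPathFT (adjAddMid (flip A) t s) none u p.reverse := by
    have := pathFT_reverse hp
    rwa [adj_flip] at this
  have := start_none (A := flip A) hst.symm hrev (by simpa using hl)
  have h2 : p.reverse.reverse = ([none, some s] : List (Option V)).reverse := by rw [this]
  simpa using h2
end Mid

lemma all_some {V : Type*} : ∀ {l : List (Option V)}, (none ∉ l) → ∃ q : List V, l = q.map some := by
  intro l
  induction l with
  | nil => exact fun _ => ⟨[], rfl⟩
  | cons a m ih =>
    intro h
    obtain ⟨q, hq⟩ := ih (fun hm => h (List.mem_cons_of_mem _ hm))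
    cases a with
    | none => exact absurd (List.mem_cons_self) h
    | some a => exact ⟨a :: q, by simp [hq]⟩

section Core
variable {V : Type*} {A : V → V → Prop} {s t : V}

lemma core (hst : s ≠ t) {u v : Option V} {p1 p2 : List (Option V)}
    (h1 : IsPathFT (adjAddMid A s t) u v p1)
    (h2 : IsPathFT (adjAddMid A s t) u v p2)
    (hl1 : 2 ≤ p1.length) (hl2 : 2 ≤ p2.length) (hne : p1 ≠ p2)
    (hdisj : ∀ x, x ∈ p1 → x ∈ p2 → x = u ∨ x = v)
    (hcover : ∀ x : Option V, x ∈ p1 ∨ x ∈ p2)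
    (hn : (none : Option V) ∈ p1) :
    ∃ p : List V, IsPathFT A s t p ∧ ∀ x : V, x ∈ p := by
  by_cases hu : u = (none : Option V)
  · subst hu
    exact absurd ((start_none hst h1 hl1).trans (start_none hst h2 hl2).symm) hne
  by_cases hv : v = (none : Option V)
  · subst hv
    exact absurd ((end_none hst h1 hl1).trans (end_none hst h2 hl2).symm) hne
  -- main case
  obtain ⟨⟨hne1, hnd1, hch1⟩, hhd1, hlst1⟩ := h1
  have hC : ∀ (i : ℕ) (h : i < p1.length - 1), adjAddMid A s t (p1.get ⟨i, by omega⟩) (p1.get ⟨i + 1, by omega⟩) :=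
    fun i h => List.isChain_iff_getElem.1 hch1 i (by omega)
  obtain ⟨⟨i, hi⟩, hgi⟩ := List.mem_iff_get.1 hn
  have hget0 : p1.get ⟨0, by omega⟩ = u := by
    rw [List.head?_eq_head hne1] at hhd1
    have : p1.head hne1 = u := by injection hhd1
    rw [← this]
    exact (List.get_mk_zero _).symm ▸ rfl
  have hgetL : p1.get ⟨p1.length - 1, by omega⟩ = v := by
    rw [List.getLast?_eq_getLast_of_ne_nil hne1] at hlst1
    have : p1.getLast hne1 = v := by injection hlst1
    rw [← this, List.getLast_eq_getElem]
    rfl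
  have hi0 : i ≠ 0 := by
    intro h; subst h
    exact hu (hget0 ▸ hgi.symm ▸ rfl)
  have hiL : i ≠ p1.length - 1 := by
    intro h
    apply hv
    rw [← hgetL, ← hgi]
    exact congrArg p1.get (Fin.mk_eq_mk.mpr h.symm)
  -- predecessor of none is some s, hence u = some s and i = 1
  have hpred := hC (i - 1) (by omega)
  rw [show (⟨i - 1 + 1, by omega⟩ : Fin p1.length) = ⟨i, hi⟩ from Fin.mk_eq_mk.mpr (by omega),
    hgi] at hpred
  have hpreds : p1.get ⟨i - 1, by omega⟩ = some s := in_none hpred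
  have hus : u = some s :=
    s_head hst ⟨⟨hne1, hnd1, hch1⟩, hhd1, hlst1⟩ (hpreds ▸ p1.get_mem _)
  have hi1 : i = 1 := by
    have : (⟨i - 1, by omega⟩ : Fin p1.length) = ⟨0, by omega⟩ :=
      hnd1.get_inj_iff.mp (by rw [hpreds, hget0, hus])
    have := Fin.mk_eq_mk.mp this
    omega
  -- successor of none is some t, hence v = some t and length = 3
  have hsucc := hC i (by omega)
  rw [hgi] at hsucc
  have hsuct : p1.get ⟨i + 1, by omega⟩ = some t := out_none hsucc
  have hvt : v = some t :=
    t_last hst ⟨⟨hne1, hnd1, hch1⟩, hhd1, hlst1⟩ (hsuct ▸ p1.get_mem _)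
  have hL3 : p1.length = 3 := by
    have : (⟨i + 1, by omega⟩ : Fin p1.length) = ⟨p1.length - 1, by omega⟩ :=
      hnd1.get_inj_iff.mp (by rw [hsuct, hgetL, hvt])
    have := Fin.mk_eq_mk.mp this
    omega
  -- membership of p1 is exactly {some s, none, some t}
  have hmem1 : ∀ x ∈ p1, x = some s ∨ x = none ∨ x = some t := by
    intro x hx
    obtain ⟨⟨j, hj⟩, hgj⟩ := List.mem_iff_get.1 hx
    rw [hL3] at hj
    interval_cases j
    · left; rw [← hgj]; rw [hus] at hget0; exact hget0
    · right; left; rw [← hgj, ← hgi]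
      exact congrArg p1.get (Fin.mk_eq_mk.mpr hi1.symm)
    · right; right; rw [← hgj, ← hsuct]
      exact congrArg p1.get (Fin.mk_eq_mk.mpr (by omega))
  -- none ∉ p2
  have hn2 : (none : Option V) ∉ p2 := by
    intro h
    rcases hdisj none hn h with h' | h'
    · exact hu h'.symm
    · exact hv h'.symm
  obtain ⟨q, rfl⟩ := all_some hn2
  obtain ⟨⟨hne2, hnd2, hch2⟩, hhd2, hlst2⟩ := h2
  refine ⟨q, ⟨⟨?_, ?_, ?_⟩, ?_, ?_⟩, ?_⟩
  · simpa using hne2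
  · exact hnd2.of_map some
  · have := List.isChain_map (some : V → Option V) |>.1 hch2
    exact this.imp (fun a b h => h.1)
  · rw [List.head?_map, hus] at hhd2
    obtain ⟨a, ha1, ha2⟩ := Option.map_eq_some_iff.mp hhd2
    have : a = s := by injection ha2
    rw [ha1, this]
  · rw [List.getLast?_map, hvt] at hlst2
    obtain ⟨a, ha1, ha2⟩ := Option.map_eq_some_iff.mp hlst2
    have : a = t := by injection ha2
    rw [ha1, this]
  · intro x
    rcases hcover (some x) with hx | hx
    · rcases hmem1 (some x) hx with h' | h' | h'
      · have : x = s := by injection h'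
        subst this
        rw [List.head?_map, hus] at hhd2
        obtain ⟨a, ha1, ha2⟩ := Option.map_eq_some_iff.mp hhd2
        have ha : a = x := by injection ha2
        exact ha ▸ List.mem_of_mem_head? ha1
      · simp at h'
      · have : x = t := by injection h'
        subst this
        rw [List.getLast?_map, hvt] at hlst2
        obtain ⟨a, ha1, ha2⟩ := Option.map_eq_some_iff.mp hlst2
        have ha : a = x := by injection ha2
        exact ha ▸ List.mem_of_mem_getLast? ha1
    · exact (List.mem_map_of_injective (Option.some_injective V)).mp hx
end Core

theorem stmt12 {V : Type*} [Fintype V] (A : V → V → Prop)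
    (harc : ∀ a b, A a b → a ≠ b)
    (hcard : 2 ≤ Fintype.card V) (s t : V) (hst : s ≠ t) :
    (∃ p : List V, IsPathFT A s t p ∧ ∀ x : V, x ∈ p) ↔
    (∃ l1 l2, 1 ≤ l1 ∧ 1 ≤ l2 ∧ l1 + l2 = Fintype.card V + 1 ∧
      ContainsSpindle2 (adjAddMid A s t) l1 l2) := by
  classical
  constructor
  · rintro ⟨p, ⟨⟨hpne, hpnd, hpch⟩, hphd, hplst⟩, hall⟩
    have hlen : p.length = Fintype.card V := by
      rw [← List.toFinset_card_of_nodup hpnd]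
      have : p.toFinset = Finset.univ :=
        Finset.eq_univ_iff_forall.2 (fun x => List.mem_toFinset.2 (hall x))
      rw [this, Finset.card_univ]
    have hC : ∀ (i : ℕ) (h : i < p.length - 1), A (p.get ⟨i, by omega⟩) (p.get ⟨i + 1, by omega⟩) :=
      fun i h => List.isChain_iff_getElem.1 hpch i (by omega)
    have hget0 : p.get ⟨0, by omega⟩ = s := by
      rw [List.head?_eq_head hpne] at hphd
      have : p.head hpne = s := by injection hphd
      rw [← this]
      exact (List.get_mk_zero _).symm ▸ rfl
    have hgetL : p.get ⟨p.length - 1, by omega⟩ = t := by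
      rw [List.getLast?_eq_getLast_of_ne_nil hpne] at hplst
      have : p.getLast hpne = t := by injection hplst
      rw [← this, List.getLast_eq_getElem]
      rfl
    refine ⟨Fintype.card V - 1, 2, by omega, by omega, by omega, some s, some t,
      p.map some, [some s, none, some t], ⟨⟨?_, ?_, ?_⟩, ?_, ?_⟩, ⟨⟨?_, ?_, ?_⟩, ?_, ?_⟩,
      ?_, ?_, ?_, ?_⟩
    · simp [hpne]
    · exact hpnd.map (Option.some_injective V)
    · rw [List.Chain', List.isChain_map]
      refine List.isChain_iff_getElem.2 (fun i hi => ?_)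
      refine ⟨hC i (by omega), ?_, ?_⟩
      · intro h
        have : (⟨i + 1, by omega⟩ : Fin p.length) = ⟨0, by omega⟩ :=
          hpnd.get_inj_iff.mp (by rw [hget0]; exact h)
        have := Fin.mk_eq_mk.mp this
        omega
      · intro h
        have : (⟨i, by omega⟩ : Fin p.length) = ⟨p.length - 1, by omega⟩ :=
          hpnd.get_inj_iff.mp (by rw [hgetL]; exact h)
        have := Fin.mk_eq_mk.mp this
        omega
    · rw [List.head?_map, hphd]; rfl
    · rw [List.getLast?_map, hplst]; rfl
    · simp
    · simp [hst]
    · refine List.isChain_cons_cons.2 ⟨rfl, List.isChain_cons_cons.2 ⟨rfl, ?_⟩⟩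
      simp
    · rfl
    · simp
    · rw [List.length_map, hlen]; omega
    · simp
    · intro h
      have : (none : Option V) ∈ p.map some := by rw [h]; simp
      simp at this
    · intro x hx1 hx2
      simp only [List.mem_cons, List.mem_singleton, List.not_mem_nil, or_false] at hx2
      rcases hx2 with rfl | rfl | rfl
      · exact Or.inl rfl
      · exfalso; simp at hx1
      · exact Or.inr rfl
  · rintro ⟨l1, l2, hl1, hl2, hsum, u, v, p1, p2, hp1, hp2, hlen1, hlen2, hne, hdisj⟩
    have hnd1 := hp1.1.2.1
    have hnd2 := hp2.1.2.1
    have hc1 : p1.toFinset.card = p1.length := List.toFinset_card_of_nodup hnd1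
    have hc2 : p2.toFinset.card = p2.length := List.toFinset_card_of_nodup hnd2
    have hsub : p1.toFinset ∩ p2.toFinset ⊆ {u, v} := by
      intro x hx
      rw [Finset.mem_inter, List.mem_toFinset, List.mem_toFinset] at hx
      simpa using hdisj x hx.1 hx.2
    have hinter : (p1.toFinset ∩ p2.toFinset).card ≤ 2 :=
      le_trans (Finset.card_le_card hsub) ((Finset.card_insert_le u {v}).trans (by simp))
    have hunion : (p1.toFinset ∪ p2.toFinset).card ≤ Fintype.card V + 1 := by
      have := Finset.card_le_univ (p1.toFinset ∪ p2.toFinset)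
      simpa [Fintype.card_option] using this
    have key := Finset.card_union_add_card_inter p1.toFinset p2.toFinset
    have hcovcard : (p1.toFinset ∪ p2.toFinset).card = Fintype.card V + 1 := by omega
    have huniv : p1.toFinset ∪ p2.toFinset = Finset.univ :=
      Finset.eq_univ_of_card _ (by rw [hcovcard, Fintype.card_option])
    have hcover : ∀ x : Option V, x ∈ p1 ∨ x ∈ p2 := by
      intro x
      have := Finset.eq_univ_iff_forall.1 huniv x
      rw [Finset.mem_union, List.mem_toFinset, List.mem_toFinset] at this
      exact this
    rcases hcover none with h | h
    · exact core hst hp1 hp2 (le_trans (by omega) hlen1) (le_trans (by omega) hlen2)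
        hne hdisj hcover h
    · exact core hst hp2 hp1 (le_trans (by omega) hlen2) (le_trans (by omega) hlen1)
        hne.symm (fun x a b => (hdisj x b a)) (fun x => (hcover x).symm) h
end

section
/- Let ℓ_1 ≥ 1 be an integer, let G be a digraph on n vertices with n ≥ ℓ_1 + 2, and let s ≠ t be vertices of G. Let G' be the digraph obtained from G by deleting all arcs with head s, all arcs with tail t, and every arc from s to t, and then adding an (s,t)-path with exactly ℓ_1 arcs whose ℓ_1 − 1 internal vertices are new (when ℓ_1 = 1 this means adding the single arc (s,t)). Then G has a Hamiltonian (s,t)-path if and only if G' contains a subdivision of a (ℓ_1, n−1)-spindle. -/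
/-- The digraph `G'` obtained from `G` (arc relation `A`) by deleting all arcs with
head `s`, all arcs with tail `t` and every arc from `s` to `t`, and adding an
`(s,t)`-path with exactly `l1` arcs whose `l1 - 1` internal vertices are the new
vertices `Sum.inr j`, `j : Fin (l1 - 1)` (for `l1 = 1` this is just the arc `(s,t)`).
Original vertices are `Sum.inl v`. -/
def adjAddPath {V : Type*} (A : V → V → Prop) (s t : V) (l1 : ℕ) :
    V ⊕ Fin (l1 - 1) → V ⊕ Fin (l1 - 1) → Prop
  | .inl a, .inl b =>
      (A a b ∧ b ≠ s ∧ a ≠ t ∧ ¬(a = s ∧ b = t)) ∨ (l1 = 1 ∧ a = s ∧ b = t)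
  | .inl a, .inr j => a = s ∧ (j : ℕ) = 0
  | .inr j, .inl b => b = t ∧ (j : ℕ) + 2 = l1
  | .inr j, .inr j' => (j : ℕ) + 1 = (j' : ℕ)


private lemma chain'_iff_getElem' {α : Type*} {R : α → α → Prop} {l : List α} :
    l.Chain' R ↔ ∀ (i : ℕ) (h : i + 1 < l.length), R l[i] l[i+1] := by
  show List.IsChain R l ↔ _
  refine List.isChain_iff_getElem.trans ?_
  constructor
  · intro h i hi
    have := h i (by omega)
    simpa using this
  · intro h i hi
    have := h i (by omega)
    simpa using this

private lemma head_of_no_in {V : Type*} {A : V → V → Prop} {p : List V}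
    (hp : p.Chain' A) {x : V} (hx : x ∈ p) (h : ∀ y, ¬ A y x) : p.head? = some x := by
  obtain ⟨i, hi, hget⟩ := List.mem_iff_getElem.mp hx
  rcases Nat.eq_zero_or_pos i with h0 | h0
  · subst h0
    rw [List.head?_eq_getElem?, List.getElem?_eq_getElem hi, hget]
  · exfalso
    obtain ⟨j, rfl⟩ := Nat.exists_eq_succ_of_ne_zero (by omega : i ≠ 0)
    have harc := chain'_iff_getElem'.mp hp j (by omega)
    rw [hget] at harc
    exact h _ harc

private lemma last_of_no_out {V : Type*} {A : V → V → Prop} {p : List V}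
    (hp : p.Chain' A) {x : V} (hx : x ∈ p) (h : ∀ y, ¬ A x y) : p.getLast? = some x := by
  obtain ⟨i, hi, hget⟩ := List.mem_iff_getElem.mp hx
  rcases Nat.lt_or_ge (i + 1) p.length with h0 | h0
  · exfalso
    have harc := chain'_iff_getElem'.mp hp i h0
    rw [hget] at harc
    exact h _ harc
  · have : i = p.length - 1 := by omega
    subst this
    rw [List.getLast?_eq_getElem?, List.getElem?_eq_getElem hi, hget]

private lemma exists_map_inl {V F : Type*} (p : List (V ⊕ F))
    (h : ∀ w ∈ p, ∃ a, w = Sum.inl a) : ∃ q : List V, p = q.map Sum.inl := by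
  induction p with
  | nil => exact ⟨[], rfl⟩
  | cons w p ih =>
    obtain ⟨q, hq⟩ := ih (fun w hw => h w (List.mem_cons_of_mem _ hw))
    obtain ⟨a, ha⟩ := h w List.mem_cons_self
    exact ⟨a :: q, by simp [ha, hq]⟩

private def spindleF {V : Type*} (s t : V) (l1 : ℕ) (i : ℕ) : V ⊕ Fin (l1 - 1) :=
  if h0 : i = 0 then .inl s else if h : i < l1 then .inr ⟨i - 1, by omega⟩ else .inl t

theorem stmt13 {V : Type*} [Fintype V] (A : V → V → Prop)
    (harc : ∀ a b, A a b → a ≠ b)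
    (l1 : ℕ) (hl1 : 1 ≤ l1) (hcard : l1 + 2 ≤ Fintype.card V)
    (s t : V) (hst : s ≠ t) :
    (∃ p : List V, IsPathFT A s t p ∧ ∀ x : V, x ∈ p) ↔
    ContainsSpindle2 (adjAddPath A s t l1) l1 (Fintype.card V - 1) := by
  classical
  constructor
  · rintro ⟨p, ⟨⟨hne, hnd, hch⟩, hhd, hlast⟩, hall⟩
    have hlen : p.length = Fintype.card V := by
      have h1 : p.toFinset = Finset.univ :=
        Finset.eq_univ_iff_forall.mpr (fun x => List.mem_toFinset.mpr (hall x))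
      have h2 := List.toFinset_card_of_nodup hnd
      rw [h1, Finset.card_univ] at h2
      omega
    have hlenpos : 0 < p.length := by omega
    have hget0 : p[0] = s := by
      rw [List.head?_eq_getElem?, List.getElem?_eq_getElem hlenpos] at hhd
      exact Option.some_inj.mp hhd
    have hgetlast : p[p.length - 1]'(by omega) = t := by
      rw [List.getLast?_eq_getElem?, List.getElem?_eq_getElem (by omega)] at hlast
      exact Option.some_inj.mp hlast
    refine ⟨Sum.inl s, Sum.inl t, (List.range (l1+1)).map (spindleF s t l1),
      p.map Sum.inl, ?_, ?_, ?_, ?_, ?_, ?_⟩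
    · -- the added chain is a path from inl s to inl t
      have hclen : ((List.range (l1+1)).map (spindleF s t l1)).length = l1 + 1 := by simp
      refine ⟨⟨by simp, ?_, ?_⟩, ?_, ?_⟩
      · refine List.Nodup.map_on ?_ List.nodup_range
        intro i hi j hj h
        simp only [List.mem_range] at hi hj
        unfold spindleF at h
        split_ifs at h <;> simp_all <;> omega
      · rw [chain'_iff_getElem']
        intro i hi
        rw [hclen] at hi
        simp only [List.getElem_map, List.getElem_range]
        unfold spindleF
        split_ifs with h1 h2 h3 h4 h5 h6 <;>
          simp_all [adjAddPath] <;> omega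
      · rw [List.head?_eq_getElem?, List.getElem?_eq_getElem (by simp : 0 < _)]
        simp [spindleF]
      · rw [List.getLast?_eq_getElem?, List.getElem?_eq_getElem (by simp : _ - 1 < _)]
        simp only [List.getElem_map, hclen]
        simp only [List.getElem_range]
        simp [spindleF]
        exact fun h => absurd h (by omega)
    · -- p.map inl is a path from inl s to inl t
      refine ⟨⟨by simpa using hne, hnd.map Sum.inl_injective, ?_⟩, ?_, ?_⟩
      · rw [show List.Chain' _ _ ↔ List.Chain' _ _ from List.isChain_map _, chain'_iff_getElem']
        intro i hi
        have ha : A p[i] p[i+1] := chain'_iff_getElem'.mp hch i hi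
        refine Or.inl ⟨ha, ?_, ?_, ?_⟩
        · intro hb
          have : p[i+1] = p[0] := by rw [hb, hget0]
          have := (hnd.getElem_inj_iff).mp this
          omega
        · intro hb
          have : p[i] = p[p.length - 1]'(by omega) := by rw [hb, hgetlast]
          have := (hnd.getElem_inj_iff).mp this
          omega
        · rintro ⟨hb1, hb2⟩
          have e1 : p[i] = p[0] := by rw [hb1, hget0]
          have e2 : p[i+1] = p[p.length - 1]'(by omega) := by rw [hb2, hgetlast]
          have i1 := (hnd.getElem_inj_iff).mp e1
          have i2 := (hnd.getElem_inj_iff).mp e2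
          omega
      · rw [List.head?_map, hhd]; rfl
      · rw [List.getLast?_map, hlast]; rfl
    · simp
    · simp [hlen]; omega
    · intro h
      have := congrArg List.length h
      simp [hlen] at this
      omega
    · intro x hx1 hx2
      simp only [List.mem_map, List.mem_range] at hx1 hx2
      obtain ⟨i, hi, hfi⟩ := hx1
      obtain ⟨b, hb, hbx⟩ := hx2
      unfold spindleF at hfi
      split_ifs at hfi with h0 hlt
      · left; rw [← hfi]
      · exfalso; rw [← hbx] at hfi; exact nomatch hfi
      · right; rw [← hfi]
  · rintro ⟨u, v, p1, p2, ⟨⟨hne1, hnd1, hch1⟩, hhd1, hlast1⟩,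
      ⟨⟨hne2, hnd2, hch2⟩, hhd2, hlast2⟩, hlen1, hlen2, hne12, hdisj⟩
    set n := Fintype.card V with hn
    rw [show (n - 1) + 1 = n by omega] at hlen2
    have hcardW : Fintype.card (V ⊕ Fin (l1-1)) = n + (l1 - 1) := by simp [hn]
    have hsub : p1.toFinset ∩ p2.toFinset ⊆ {u, v} := by
      intro x hx
      simp only [Finset.mem_inter, List.mem_toFinset] at hx
      simp only [Finset.mem_insert, Finset.mem_singleton]
      exact hdisj x hx.1 hx.2
    have hinter : (p1.toFinset ∩ p2.toFinset).card ≤ 2 :=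
      le_trans (Finset.card_le_card hsub)
        ((Finset.card_insert_le _ _).trans (by simp))
    have hc1 : p1.toFinset.card = p1.length := List.toFinset_card_of_nodup hnd1
    have hc2 : p2.toFinset.card = p2.length := List.toFinset_card_of_nodup hnd2
    have hunion_le : (p1.toFinset ∪ p2.toFinset).card ≤ n + (l1 - 1) := by
      rw [← hcardW]; exact Finset.card_le_univ _
    have hkey := Finset.card_union_add_card_inter p1.toFinset p2.toFinset
    have hlen1' : p1.length = l1 + 1 := by omega
    have hlen2' : p2.length = n := by omega
    have huniv : (p1.toFinset ∪ p2.toFinset) = Finset.univ := by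
      apply Finset.eq_univ_of_card
      rw [hcardW]; omega
    have hmem : ∀ w : V ⊕ Fin (l1-1), w ∈ p1 ∨ w ∈ p2 := by
      intro w
      have : w ∈ p1.toFinset ∪ p2.toFinset := huniv ▸ Finset.mem_univ w
      simpa using this
    have hsin : ∀ y, ¬ adjAddPath A s t l1 y (Sum.inl s) := by
      rintro (a | j) h <;> simp [adjAddPath, hst] at h
    have htout : ∀ y, ¬ adjAddPath A s t l1 (Sum.inl t) y := by
      rintro (b | j) h <;> simp [adjAddPath, hst, hst.symm] at h
    have hu : u = Sum.inl s := by
      rcases hmem (Sum.inl s) with h | h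
      · have := head_of_no_in hch1 h hsin
        rw [hhd1] at this
        exact Option.some_inj.mp this
      · have := head_of_no_in hch2 h hsin
        rw [hhd2] at this
        exact Option.some_inj.mp this
    have hv : v = Sum.inl t := by
      rcases hmem (Sum.inl t) with h | h
      · have := last_of_no_out hch1 h htout
        rw [hlast1] at this
        exact Option.some_inj.mp this
      · have := last_of_no_out hch2 h htout
        rw [hlast2] at this
        exact Option.some_inj.mp this
    subst hu hv
    have hp2pos : 0 < p2.length := by omega
    have hq0 : p2[0] = Sum.inl s := by
      rw [List.head?_eq_getElem?, List.getElem?_eq_getElem hp2pos] at hhd2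
      exact Option.some_inj.mp hhd2
    have hqlast : p2[p2.length - 1]'(by omega) = Sum.inl t := by
      rw [List.getLast?_eq_getElem?, List.getElem?_eq_getElem (by omega)] at hlast2
      exact Option.some_inj.mp hlast2
    -- index forcing: inr j sits at index j+1 in p2
    have hA : ∀ m : ℕ, ∀ j : Fin (l1-1), (j : ℕ) = m →
        ∀ i, ∀ hi : i < p2.length, p2[i] = Sum.inr j → i = m + 1 := by
      intro m
      induction m with
      | zero =>
        intro j hj i hi hget
        have hi0 : i ≠ 0 := by
          intro h; subst h; rw [hq0] at hget; exact nomatch hget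
        obtain ⟨k, rfl⟩ := Nat.exists_eq_succ_of_ne_zero hi0
        have harc := chain'_iff_getElem'.mp hch2 k hi
        rw [hget] at harc
        rcases h2 : p2[k]'(by omega) with a | j'
        · rw [h2] at harc
          simp only [adjAddPath] at harc
          have e : p2[k]'(by omega) = p2[0] := by rw [h2, hq0, harc.1]
          have := hnd2.getElem_inj_iff.mp e
          omega
        · rw [h2] at harc
          simp only [adjAddPath] at harc
          omega
      | succ m ih =>
        intro j hj i hi hget
        have hi0 : i ≠ 0 := by
          intro h; subst h; rw [hq0] at hget; exact nomatch hget
        obtain ⟨k, rfl⟩ := Nat.exists_eq_succ_of_ne_zero hi0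
        have harc := chain'_iff_getElem'.mp hch2 k hi
        rw [hget] at harc
        rcases h2 : p2[k]'(by omega) with a | j'
        · rw [h2] at harc
          simp only [adjAddPath] at harc
          omega
        · rw [h2] at harc
          simp only [adjAddPath] at harc
          have := ih j' (by omega) k (by omega) h2
          omega
    -- no inr vertex lies on p2
    have hB : ∀ k : ℕ, ∀ j : Fin (l1-1), (j : ℕ) + k = l1 - 2 → Sum.inr j ∉ p2 := by
      intro k
      induction k with
      | zero =>
        intro j hj hmemj
        obtain ⟨i, hi, hget⟩ := List.mem_iff_getElem.mp hmemj
        have hjlt := j.isLt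
        have hidx := hA (j : ℕ) j rfl i hi hget
        have hilt : i + 1 < p2.length := by omega
        have harc := chain'_iff_getElem'.mp hch2 i hilt
        rw [hget] at harc
        rcases h2 : p2[i+1] with b | j''
        · rw [h2] at harc
          simp only [adjAddPath] at harc
          have e : p2[i+1] = p2[p2.length - 1]'(by omega) := by rw [h2, hqlast, harc.1]
          have := hnd2.getElem_inj_iff.mp e
          omega
        · rw [h2] at harc
          simp only [adjAddPath] at harc
          have := j''.isLt
          omega
      | succ k ih =>
        intro j hj hmemj
        obtain ⟨i, hi, hget⟩ := List.mem_iff_getElem.mp hmemj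
        have hjlt := j.isLt
        have hidx := hA (j : ℕ) j rfl i hi hget
        have hilt : i + 1 < p2.length := by omega
        have harc := chain'_iff_getElem'.mp hch2 i hilt
        rw [hget] at harc
        rcases h2 : p2[i+1] with b | j''
        · rw [h2] at harc
          simp only [adjAddPath] at harc
          omega
        · rw [h2] at harc
          simp only [adjAddPath] at harc
          have hmem'' : Sum.inr j'' ∈ p2 := h2 ▸ List.getElem_mem _
          exact ih j'' (by omega) hmem''
    have hnoinr : ∀ w ∈ p2, ∃ a, w = Sum.inl a := by
      rintro (a | j) hw
      · exact ⟨a, rfl⟩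
      · exact absurd hw (hB (l1 - 2 - (j : ℕ)) j (by have := j.isLt; omega))
    obtain ⟨q, hq⟩ := exists_map_inl p2 hnoinr
    subst hq
    have hqlen : q.length = n := by simpa using hlen2'
    have hqnd : q.Nodup := List.Nodup.of_map _ hnd2
    have hqhd : q.head? = some s := by
      rw [List.head?_map] at hhd2
      obtain ⟨a, ha1, ha2⟩ := Option.map_eq_some_iff.mp hhd2
      rw [ha1]
      simpa using ha2
    have hqlst : q.getLast? = some t := by
      rw [List.getLast?_map] at hlast2
      obtain ⟨a, ha1, ha2⟩ := Option.map_eq_some_iff.mp hlast2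
      rw [ha1]
      simpa using ha2
    have hqpos : 0 < q.length := by omega
    have hqg0 : q[0] = s := by
      rw [List.head?_eq_getElem?, List.getElem?_eq_getElem hqpos] at hqhd
      exact Option.some_inj.mp hqhd
    have hqglast : q[q.length - 1]'(by omega) = t := by
      rw [List.getLast?_eq_getElem?, List.getElem?_eq_getElem (by omega)] at hqlst
      exact Option.some_inj.mp hqlst
    have hchq : q.Chain' A := by
      have : List.Chain' _ q := List.isChain_map (Sum.inl : V → V ⊕ Fin (l1-1)) |>.mp hch2
      rw [chain'_iff_getElem'] at this ⊢
      intro i hi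
      have h := this i hi
      simp only [adjAddPath] at h
      rcases h with ⟨ha, _⟩ | ⟨_, h1, h2⟩
      · exact ha
      · exfalso
        have e1 : q[i] = q[0] := by rw [h1, hqg0]
        have e2 : q[i+1] = q[q.length - 1]'(by omega) := by rw [h2, hqglast]
        have i1 := hqnd.getElem_inj_iff.mp e1
        have i2 := hqnd.getElem_inj_iff.mp e2
        omega
    have hallq : ∀ x : V, x ∈ q := by
      have : q.toFinset = Finset.univ := by
        apply Finset.eq_univ_of_card
        rw [List.toFinset_card_of_nodup hqnd, hqlen]
      intro x
      have := this ▸ Finset.mem_univ x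
      simpa using this
    exact ⟨q, ⟨⟨by intro h; rw [h] at hqpos; simp at hqpos, hqnd, hchq⟩, hqhd, hqlst⟩, hallq⟩
end
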